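/- arXiv:math/0506150 — 4 statements merged into one kernel-verified Lean document; each statement's English description precedes it below -/
import Mathlib

section
/- For every integer N ≥ 0, the finite sum f_N(z) = (q)_N · Σ_{j=0}^{N} z^j q^{j^2} / ((zq)_j (q)_j (q)_{N−j}) equals 1/(zq)_N. -/
noncomputable def gb (q : ℂ) : ℕ → ℕ → ℂ
  | _, 0 => 1
  | 0, _+1 => 0
  | n+1, k+1 => gb q n (k+1) + q ^ (n-k) * gb q n k

lemma gb_zero_of_lt (q : ℂ) : ∀ n k, n < k → gb q n k = 0 := by
  intro n
  induction n with
  | zero => intro k hk; cases k with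
    | zero => omega
    | succ k => rfl
  | succ n ih =>
    intro k hk
    cases k with
    | zero => omega
    | succ k =>
      show gb q n (k+1) + q ^ (n-k) * gb q n k = 0
      rw [ih (k+1) (by omega), ih k (by omega)]
      ring

lemma gb_diag (q : ℂ) : ∀ n, gb q n n = 1 := by
  intro n
  induction n with
  | zero => rfl
  | succ n ih =>
    show gb q n (n+1) + q ^ (n-n) * gb q n n = 1
    rw [gb_zero_of_lt q n (n+1) (by omega), ih]
    simp

lemma gb_mul (q : ℂ) : ∀ n k, k ≤ n →
    gb q n k * ((∏ i ∈ Finset.range k, (1 - q^(i+1))) *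
      ∏ i ∈ Finset.range (n-k), (1 - q^(i+1))) =
    ∏ i ∈ Finset.range n, (1 - q^(i+1)) := by
  intro n
  induction n with
  | zero => intro k hk; interval_cases k; simp [gb]
  | succ n ih =>
    intro k hk
    cases k with
    | zero => simp [gb]
    | succ k =>
      show (gb q n (k+1) + q^(n-k) * gb q n k) * _ = _
      by_cases hkn : k = n
      · subst hkn
        rw [gb_zero_of_lt q k (k+1) (by omega), gb_diag]
        simp
      · have hk1 : k + 1 ≤ n := by omega
        have e1 := ih (k+1) hk1
        have e2 := ih k (by omega)
        rw [show n - k = (n-(k+1))+1 from by omega, Finset.prod_range_succ] at e2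
        rw [show n - k = (n-(k+1))+1 from by omega,
          show n+1-(k+1) = (n-(k+1))+1 from by omega,
          Finset.prod_range_succ, Finset.prod_range_succ, Finset.prod_range_succ]
        rw [Finset.prod_range_succ] at e1
        have hpow : q^((n-(k+1))+1) * q^(k+1) = q^(n+1) := by
          rw [← pow_add]; congr 1; omega
        linear_combination (1 - q^((n-(k+1))+1)) * e1 +
          q^((n-(k+1))+1) * (1 - q^(k+1)) * e2 +
          (-(∏ i ∈ Finset.range n, (1 - q^(i+1)))) * hpow

lemma key (q : ℂ) : ∀ (N : ℕ) (z : ℂ),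
    ∑ j ∈ Finset.range (N+1), gb q N j * (z^j * q^(j^2) *
      ∏ i ∈ Finset.range (N-j), (1 - z * q^(j+1+i))) = 1 := by
  intro N
  induction N with
  | zero => intro z; simp [gb]
  | succ N ih =>
    intro z
    rw [Finset.sum_range_succ']
    have hsplit : ∀ k ∈ Finset.range (N+1),
        gb q (N+1) (k+1) * (z^(k+1) * q^((k+1)^2) *
          ∏ i ∈ Finset.range (N+1-(k+1)), (1 - z * q^((k+1)+1+i)))
        = gb q N (k+1) * (z^(k+1) * q^((k+1)^2) *
            ∏ i ∈ Finset.range (N+1-(k+1)), (1 - z * q^((k+1)+1+i)))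
          + q^(N-k) * gb q N k * (z^(k+1) * q^((k+1)^2) *
            ∏ i ∈ Finset.range (N+1-(k+1)), (1 - z * q^((k+1)+1+i))) := by
      intro k hk
      show (gb q N (k+1) + q^(N-k) * gb q N k) * _ = _
      ring
    rw [Finset.sum_congr rfl hsplit, Finset.sum_add_distrib]
    rw [show gb q (N+1) 0 = gb q N 0 from by simp [gb]]
    have hA : (∑ k ∈ Finset.range (N+1), gb q N (k+1) * (z^(k+1) * q^((k+1)^2) *
          ∏ i ∈ Finset.range (N+1-(k+1)), (1 - z * q^((k+1)+1+i))))
        + gb q N 0 * (z^0 * q^(0^2) *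
          ∏ i ∈ Finset.range (N+1-0), (1 - z * q^(0+1+i)))
        = ∑ j ∈ Finset.range (N+1+1), gb q N j * (z^j * q^(j^2) *
          ∏ i ∈ Finset.range (N+1-j), (1 - z * q^(j+1+i))) := by
      rw [Finset.sum_range_succ' (fun j => gb q N j * (z^j * q^(j^2) *
          ∏ i ∈ Finset.range (N+1-j), (1 - z * q^(j+1+i)))) (N+1)]
    have hB : ∑ j ∈ Finset.range (N+1+1), gb q N j * (z^j * q^(j^2) *
          ∏ i ∈ Finset.range (N+1-j), (1 - z * q^(j+1+i))) = 1 - z * q^(N+1) := by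
      rw [Finset.sum_range_succ]
      rw [gb_zero_of_lt q N (N+1) (by omega)]
      have hterm : ∀ j ∈ Finset.range (N+1),
          gb q N j * (z^j * q^(j^2) * ∏ i ∈ Finset.range (N+1-j), (1 - z * q^(j+1+i)))
          = (1 - z * q^(N+1)) * (gb q N j * (z^j * q^(j^2) *
              ∏ i ∈ Finset.range (N-j), (1 - z * q^(j+1+i)))) := by
        intro j hj
        simp only [Finset.mem_range] at hj
        rw [show N+1-j = (N-j)+1 from by omega, Finset.prod_range_succ,
          show j+1+(N-j) = N+1 from by omega]
        ring
      rw [Finset.sum_congr rfl hterm, ← Finset.mul_sum, ih z]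
      ring
    have hC : ∑ k ∈ Finset.range (N+1), q^(N-k) * gb q N k * (z^(k+1) * q^((k+1)^2) *
          ∏ i ∈ Finset.range (N+1-(k+1)), (1 - z * q^((k+1)+1+i))) = z * q^(N+1) := by
      have hterm : ∀ k ∈ Finset.range (N+1),
          q^(N-k) * gb q N k * (z^(k+1) * q^((k+1)^2) *
            ∏ i ∈ Finset.range (N+1-(k+1)), (1 - z * q^((k+1)+1+i)))
          = z * q^(N+1) * (gb q N k * ((z*q)^k * q^(k^2) *
              ∏ i ∈ Finset.range (N-k), (1 - (z*q) * q^(k+1+i)))) := by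
        intro k hk
        simp only [Finset.mem_range] at hk
        rw [show N+1-(k+1) = N-k from by omega]
        have hprod : ∏ i ∈ Finset.range (N-k), (1 - z * q^((k+1)+1+i))
            = ∏ i ∈ Finset.range (N-k), (1 - (z*q) * q^(k+1+i)) := by
          refine Finset.prod_congr rfl fun i _ => ?_
          rw [show (k+1)+1+i = (k+1+i)+1 from by omega, pow_succ]
          ring
        rw [hprod]
        have hq2 : q^(N-k) * q^(2*k+1) = q^(N+1) * q^k := by
          rw [← pow_add, ← pow_add]; congr 1; omega
        rw [show (k+1)^2 = k^2 + (2*k+1) from by ring, pow_add, mul_pow]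
        linear_combination (z^(k+1) * q^(k^2) *
          ∏ i ∈ Finset.range (N-k), (1 - (z*q) * q^(k+1+i))) * (gb q N k) * hq2
      rw [Finset.sum_congr rfl hterm, ← Finset.mul_sum, ih (z*q)]
      ring
    linear_combination hA + hB + hC


/-- For every `N ≥ 0`,
`f_N(z) = (q)_N · Σ_{j=0}^N z^j q^{j²} / ((zq)_j (q)_j (q)_{N-j}) = 1/(zq)_N`. -/
theorem stmt2 (q z : ℂ) (N : ℕ)
    (hq : ∀ i ∈ Finset.range N, q ^ (i + 1) ≠ 1)
    (hz : ∀ i ∈ Finset.range N, z * q ^ (i + 1) ≠ 1) :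
    (∏ j ∈ Finset.range N, (1 - q ^ (j + 1))) *
        ∑ j ∈ Finset.range (N + 1),
          z ^ j * q ^ (j ^ 2) /
            ((∏ i ∈ Finset.range j, (1 - z * q ^ (i + 1))) *
              (∏ i ∈ Finset.range j, (1 - q ^ (i + 1))) *
              ∏ i ∈ Finset.range (N - j), (1 - q ^ (i + 1)))
      = (∏ j ∈ Finset.range N, (1 - z * q ^ (j + 1)))⁻¹ := by
  have hq' : ∀ i, i < N → (1 : ℂ) - q ^ (i + 1) ≠ 0 := fun i hi =>
    sub_ne_zero.mpr (Ne.symm (hq i (Finset.mem_range.mpr hi)))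
  have hz' : ∀ i, i < N → (1 : ℂ) - z * q ^ (i + 1) ≠ 0 := fun i hi =>
    sub_ne_zero.mpr (Ne.symm (hz i (Finset.mem_range.mpr hi)))
  refine eq_inv_of_mul_eq_one_right ?_
  rw [Finset.mul_sum, Finset.mul_sum]
  have hterm : ∀ j ∈ Finset.range (N+1),
      (∏ i ∈ Finset.range N, (1 - z * q ^ (i + 1))) *
        ((∏ i ∈ Finset.range N, (1 - q ^ (i + 1))) *
          (z ^ j * q ^ (j ^ 2) /
            ((∏ i ∈ Finset.range j, (1 - z * q ^ (i + 1))) *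
              (∏ i ∈ Finset.range j, (1 - q ^ (i + 1))) *
              ∏ i ∈ Finset.range (N - j), (1 - q ^ (i + 1)))))
      = gb q N j * (z ^ j * q ^ (j ^ 2) *
          ∏ i ∈ Finset.range (N - j), (1 - z * q ^ (j + 1 + i))) := by
    intro j hj
    have hjN : j ≤ N := by simpa using Nat.lt_succ_iff.mp (Finset.mem_range.mp hj)
    have hQ := gb_mul q N j hjN
    have hPsplit : ∏ i ∈ Finset.range N, (1 - z * q ^ (i + 1))
        = (∏ i ∈ Finset.range j, (1 - z * q ^ (i + 1))) *
          ∏ i ∈ Finset.range (N - j), (1 - z * q ^ (j + 1 + i)) := by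
      have h := Finset.prod_range_add (fun i => 1 - z * q ^ (i + 1)) j (N - j)
      rw [show j + (N - j) = N from by omega] at h
      rw [h]
      congr 1
      refine Finset.prod_congr rfl fun i _ => ?_
      rw [show j + i + 1 = j + 1 + i from by omega]
    have hA : (∏ i ∈ Finset.range j, (1 - z * q ^ (i + 1))) ≠ 0 :=
      Finset.prod_ne_zero_iff.mpr fun i hi =>
        hz' i (by have := Finset.mem_range.mp hi; omega)
    have hB : (∏ i ∈ Finset.range j, (1 - q ^ (i + 1))) ≠ 0 :=
      Finset.prod_ne_zero_iff.mpr fun i hi =>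
        hq' i (by have := Finset.mem_range.mp hi; omega)
    have hC : (∏ i ∈ Finset.range (N - j), (1 - q ^ (i + 1))) ≠ 0 :=
      Finset.prod_ne_zero_iff.mpr fun i hi =>
        hq' i (by have := Finset.mem_range.mp hi; omega)
    rw [← hQ, hPsplit]
    field_simp
  rw [Finset.sum_congr rfl hterm]
  exact key q N z
end

section
/- The q-Gauss summation: for |q|<1 and parameters with |c/(ab)|<1, ₂φ₁(a,b;c;q,c/(ab)) := Σ_{n≥0} (a;q)_n (b;q)_n / ((c;q)_n (q;q)_n) · (c/(ab))^n equals (c/a;q)_∞ (c/b;q)_∞ / ((c;q)_∞ (c/(ab);q)_∞). -/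
open Finset Filter Topology

/-- `(x;q)_n = ∏_{j=0}^{n-1} (1 - x q^j)`. -/
noncomputable def poch (q x : ℂ) (n : ℕ) : ℂ := ∏ j ∈ Finset.range n, (1 - x * q ^ j)

/- ### Basic facts about `poch` -/

lemma poch_succ (q x : ℂ) (n : ℕ) : poch q x (n + 1) = poch q x n * (1 - x * q ^ n) := by
  simp [poch, Finset.prod_range_succ]

lemma poch_shift (q x : ℂ) (n : ℕ) : poch q x (n + 1) = poch q (x * q) n * (1 - x) := by
  rw [poch, Finset.prod_range_succ']
  simp only [pow_zero, mul_one, poch]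
  congr 1
  exact Finset.prod_congr rfl (fun j _ => by ring_nf)

lemma poch_add (q x : ℂ) (J m : ℕ) :
    poch q x (J + m) = poch q x J * poch q (x * q ^ J) m := by
  induction m with
  | zero => simp [poch]
  | succ m ih =>
    have h1 : J + (m + 1) = (J + m) + 1 := by omega
    rw [h1, poch_succ, ih, poch_succ, pow_add]
    ring

lemma poch_ne_zero (q x : ℂ) (n : ℕ) (h : ∀ j : ℕ, (1:ℂ) - x * q ^ j ≠ 0) :
    poch q x n ≠ 0 :=
  Finset.prod_ne_zero_iff.2 fun j _ => h j

lemma one_sub_ne (w : ℂ) (h : ‖w‖ < 1) : (1 : ℂ) - w ≠ 0 := by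
  intro hw
  rw [sub_eq_zero] at hw
  rw [← hw] at h; simp at h

lemma q_factors_ne (q : ℂ) (hq1 : ‖q‖ < 1) (j : ℕ) : (1:ℂ) - q * q ^ j ≠ 0 := by
  apply one_sub_ne
  rw [norm_mul, norm_pow]
  calc ‖q‖ * ‖q‖ ^ j ≤ ‖q‖ * 1 :=
        mul_le_mul_of_nonneg_left (pow_le_one₀ (norm_nonneg q) hq1.le) (norm_nonneg q)
    _ = ‖q‖ := mul_one _
    _ < 1 := hq1

/- ### Norm bounds -/

lemma summable_geom_aux (q x : ℂ) (hq1 : ‖q‖ < 1) :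
    Summable (fun j : ℕ => ‖x‖ * ‖q‖ ^ j) :=
  (summable_geometric_of_lt_one (norm_nonneg q) hq1).mul_left _

lemma poch_norm_le (q x : ℂ) (hq1 : ‖q‖ < 1) (n : ℕ) :
    ‖poch q x n‖ ≤ Real.exp (‖x‖ * (1 - ‖q‖)⁻¹) := by
  calc ‖poch q x n‖ ≤ ∏ j ∈ range n, ‖(1 : ℂ) - x * q ^ j‖ := norm_prod_le _ _
    _ ≤ ∏ j ∈ range n, Real.exp (‖x‖ * ‖q‖ ^ j) := by
        apply Finset.prod_le_prod (fun j _ => norm_nonneg _)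
        intro j _
        calc ‖(1 : ℂ) - x * q ^ j‖ ≤ ‖(1 : ℂ)‖ + ‖x * q ^ j‖ := norm_sub_le _ _
          _ = 1 + ‖x‖ * ‖q‖ ^ j := by rw [norm_one, norm_mul, norm_pow]
          _ ≤ Real.exp (‖x‖ * ‖q‖ ^ j) := by
              have := Real.add_one_le_exp (‖x‖ * ‖q‖ ^ j); linarith
    _ = Real.exp (∑ j ∈ range n, ‖x‖ * ‖q‖ ^ j) := (Real.exp_sum _ _).symm
    _ ≤ Real.exp (‖x‖ * (1 - ‖q‖)⁻¹) := by
        apply Real.exp_le_exp.2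
        have h := Summable.sum_le_tsum (range n) (fun j _ => by positivity)
          (summable_geom_aux q x hq1)
        rwa [tsum_mul_left, tsum_geometric_of_lt_one (norm_nonneg q) hq1] at h

/-- Weierstrass: `1 - ∑ ε ≤ ∏ (1 - ε)` for `ε ∈ [0,1]`. -/
lemma one_sub_sum_le_prod_one_sub (s : Finset ℕ) (f : ℕ → ℝ)
    (h0 : ∀ j ∈ s, 0 ≤ f j) (h1 : ∀ j ∈ s, f j ≤ 1) :
    1 - ∑ j ∈ s, f j ≤ ∏ j ∈ s, (1 - f j) := by
  induction s using Finset.cons_induction with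
  | empty => simp
  | cons a s ha ih =>
    rw [Finset.sum_cons, Finset.prod_cons]
    have h0' : ∀ j ∈ s, 0 ≤ f j := fun j hj => h0 j (Finset.mem_cons_of_mem hj)
    have h1' : ∀ j ∈ s, f j ≤ 1 := fun j hj => h1 j (Finset.mem_cons_of_mem hj)
    have hih := ih h0' h1'
    have ha0 : 0 ≤ f a := h0 a (Finset.mem_cons_self a s)
    have ha1 : f a ≤ 1 := h1 a (Finset.mem_cons_self a s)
    have hs0 : 0 ≤ ∑ j ∈ s, f j := Finset.sum_nonneg h0'
    nlinarith [mul_le_mul_of_nonneg_left hih (by linarith : (0:ℝ) ≤ 1 - f a)]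

/-- If the whole series of tail norms is at most 1/2, each partial product
has norm at least 1/2. -/
lemma poch_half_lb (q x : ℂ) (hq1 : ‖q‖ < 1)
    (hx : ∑' j : ℕ, ‖x‖ * ‖q‖ ^ j ≤ 1/2) (n : ℕ) : (1/2 : ℝ) ≤ ‖poch q x n‖ := by
  have hs := summable_geom_aux q x hq1
  have hterm : ∀ j : ℕ, ‖x‖ * ‖q‖ ^ j ≤ 1/2 := fun j =>
    le_trans (Summable.le_tsum hs j (fun k _ => by positivity)) hx
  have h1 : ∀ j ∈ range n, (0:ℝ) ≤ 1 - ‖x‖ * ‖q‖ ^ j := fun j _ => by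
    have := hterm j; linarith
  calc (1/2 : ℝ) ≤ 1 - ∑ j ∈ range n, ‖x‖ * ‖q‖ ^ j := by
        have := Summable.sum_le_tsum (range n) (fun j _ => by positivity) hs; linarith
    _ ≤ ∏ j ∈ range n, (1 - ‖x‖ * ‖q‖ ^ j) :=
        one_sub_sum_le_prod_one_sub _ _ (fun j _ => by positivity)
          (fun j hj => by have := hterm j; linarith)
    _ ≤ ∏ j ∈ range n, ‖(1 : ℂ) - x * q ^ j‖ := by
        apply Finset.prod_le_prod h1
        intro j _
        calc 1 - ‖x‖ * ‖q‖ ^ j = ‖(1:ℂ)‖ - ‖x * q ^ j‖ := by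
              rw [norm_one, norm_mul, norm_pow]
          _ ≤ ‖(1:ℂ) - x * q ^ j‖ := norm_sub_norm_le _ _
    _ = ‖poch q x n‖ := by rw [poch, norm_prod]

lemma exists_poch_lb (q x : ℂ) (hq1 : ‖q‖ < 1) (hfn : ∀ j : ℕ, (1 : ℂ) - x * q ^ j ≠ 0) :
    ∃ δ : ℝ, 0 < δ ∧ ∀ n, δ ≤ ‖poch q x n‖ := by
  have htail : Tendsto (fun i => ∑' k : ℕ, ‖x‖ * ‖q‖ ^ (k + i)) atTop (𝓝 0) :=
    tendsto_sum_nat_add (fun j => ‖x‖ * ‖q‖ ^ j)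
  obtain ⟨J, hJ⟩ := (htail.eventually_le_const (by norm_num : (0:ℝ) < 1/2)).exists
  have hhalf : ∀ m, (1/2 : ℝ) ≤ ‖poch q (x * q ^ J) m‖ := by
    apply poch_half_lb q _ hq1
    calc ∑' j : ℕ, ‖x * q ^ J‖ * ‖q‖ ^ j = ∑' j : ℕ, ‖x‖ * ‖q‖ ^ (j + J) := by
          congr 1; funext j; rw [norm_mul, norm_pow, pow_add]; ring
      _ ≤ 1/2 := hJ
  have hpos : ∀ n, 0 < ‖poch q x n‖ := by
    intro n
    rw [norm_pos_iff, poch]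
    exact Finset.prod_ne_zero_iff.2 fun j _ => hfn j
  set M : ℝ := (Finset.range (J + 1)).inf' (by simp) (fun n => ‖poch q x n‖) with hM
  have hMpos : 0 < M := by
    rw [hM, Finset.lt_inf'_iff]
    exact fun n _ => hpos n
  refine ⟨M / 2, by positivity, fun n => ?_⟩
  rcases le_or_gt n J with h | h
  · have : M ≤ ‖poch q x n‖ :=
      Finset.inf'_le _ (Finset.mem_range.2 (Nat.lt_succ_of_le h))
    linarith
  · obtain ⟨m, rfl⟩ : ∃ m, n = J + m := ⟨n - J, by omega⟩
    rw [poch_add, norm_mul]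
    have h1 : M ≤ ‖poch q x J‖ :=
      Finset.inf'_le _ (Finset.mem_range.2 (Nat.lt_succ_self J))
    calc M / 2 = M * (1/2) := by ring
      _ ≤ ‖poch q x J‖ * ‖poch q (x * q ^ J) m‖ :=
          mul_le_mul h1 (hhalf m) (by norm_num) (norm_nonneg _)

/- ### Convergence of the infinite products -/

lemma multipliable_aux (q x : ℂ) (hq1 : ‖q‖ < 1) :
    Multipliable (fun j : ℕ => 1 - x * q ^ j) := by
  by_cases hfn : ∀ j : ℕ, (1 : ℂ) - x * q ^ j ≠ 0
  · apply Complex.multipliable_of_summable_log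
    apply Summable.of_norm_bounded_eventually_nat (g := fun j => 3/2 * (‖x‖ * ‖q‖ ^ j))
      (((summable_geometric_of_lt_one (norm_nonneg q) hq1).mul_left _).mul_left _)
    have h2 : Tendsto (fun j : ℕ => ‖x‖ * ‖q‖ ^ j) atTop (𝓝 0) := by
      simpa using (tendsto_pow_atTop_nhds_zero_of_norm_lt_one
        (by rwa [norm_norm] : ‖‖q‖‖ < 1)).const_mul ‖x‖
    filter_upwards [h2.eventually_le_const (by norm_num : (0:ℝ) < 1/2)] with j hj
    have he : (1 : ℂ) - x * q ^ j = 1 + -(x * q ^ j) := by ring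
    rw [he]
    have := Complex.norm_log_one_add_half_le_self (z := -(x * q ^ j))
      (by rwa [norm_neg, norm_mul, norm_pow])
    simpa [norm_mul, norm_pow] using this
  · push_neg at hfn
    obtain ⟨j0, hj0⟩ := hfn
    refine ⟨0, tendsto_const_nhds.congr' ?_⟩
    filter_upwards [eventually_ge_atTop ({j0} : Finset ℕ)] with s hs
    exact (Finset.prod_eq_zero (hs (Finset.mem_singleton_self j0)) hj0).symm

lemma tendsto_poch (q x : ℂ) (hq1 : ‖q‖ < 1) :
    Tendsto (fun n => poch q x n) atTop (𝓝 (∏' j : ℕ, (1 - x * q ^ j))) :=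
  (multipliable_aux q x hq1).hasProd.tendsto_prod_nat

lemma tprod_ne_zero (q x : ℂ) (hq1 : ‖q‖ < 1) (hfn : ∀ j : ℕ, (1:ℂ) - x * q ^ j ≠ 0) :
    (∏' j : ℕ, (1 - x * q ^ j)) ≠ 0 := by
  obtain ⟨δ, hδ, hδ'⟩ := exists_poch_lb q x hq1 hfn
  have hn : Tendsto (fun n => ‖poch q x n‖) atTop (𝓝 ‖∏' j : ℕ, (1 - x * q ^ j)‖) :=
    (tendsto_poch q x hq1).norm
  have : δ ≤ ‖∏' j : ℕ, (1 - x * q ^ j)‖ := ge_of_tendsto' hn hδ'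
  rw [← norm_pos_iff]
  linarith

/- ### The ₂φ₁ terms and their properties -/

/-- The `n`-th term of `₂φ₁(a,b;c;q,c/(ab))`. -/
noncomputable def qt (q a b c : ℂ) (n : ℕ) : ℂ :=
  poch q a n * poch q b n / (poch q c n * poch q q n) * (c / (a * b)) ^ n

/-- The series `₂φ₁(a,b;c;q,c/(ab))`. -/
noncomputable def qS (q a b c : ℂ) : ℂ := ∑' n, qt q a b c n

lemma qt_zero (q a b c : ℂ) : qt q a b c 0 = 1 := by simp [qt, poch]

set_option maxHeartbeats 1000000 in
lemma qt_step (q a b c : ℂ) (hq1 : ‖q‖ < 1) (ha : a ≠ 0) (hb : b ≠ 0)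
    (hcj : ∀ j : ℕ, (1:ℂ) - c * q ^ j ≠ 0) (n : ℕ) :
    (1 - c * q ^ n) * (1 - q * q ^ n) * qt q a b c (n + 1)
      = (1 - a * q ^ n) * (1 - b * q ^ n) * (c / (a * b)) * qt q a b c n := by
  have hPc : poch q c n ≠ 0 := poch_ne_zero _ _ _ hcj
  have hPq : poch q q n ≠ 0 := poch_ne_zero _ _ _ (q_factors_ne q hq1)
  have hcn : (1:ℂ) - c * q ^ n ≠ 0 := hcj n
  have hqn : (1:ℂ) - q * q ^ n ≠ 0 := q_factors_ne q hq1 n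
  rw [qt, qt, poch_succ, poch_succ, poch_succ, poch_succ, pow_succ]
  generalize (c / (a * b)) ^ n = Z
  field_simp
  ring_nf
  field_simp
  ring

set_option maxHeartbeats 1000000 in
lemma qt_shift (q a b c : ℂ) (hq1 : ‖q‖ < 1) (ha : a ≠ 0) (hb : b ≠ 0)
    (hcj : ∀ j : ℕ, (1:ℂ) - c * q ^ j ≠ 0) (n : ℕ) :
    (1 - c * q ^ n) * qt q a b (c * q) n = (1 - c) * q ^ n * qt q a b c n := by
  have hc0 : (1:ℂ) - c ≠ 0 := by simpa using hcj 0
  have hPc : poch q c n ≠ 0 := poch_ne_zero _ _ _ hcj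
  have hPq : poch q q n ≠ 0 := poch_ne_zero _ _ _ (q_factors_ne q hq1)
  have hcn : (1:ℂ) - c * q ^ n ≠ 0 := hcj n
  have h1 : poch q (c * q) n = poch q c n * (1 - c * q ^ n) / (1 - c) := by
    rw [eq_div_iff hc0, ← poch_succ, poch_shift]
  have h2 : (c * q / (a * b)) ^ n = (c / (a * b)) ^ n * q ^ n := by
    rw [← mul_pow]; congr 1; ring
  rw [qt, qt, h1, h2]
  generalize (c / (a * b)) ^ n = Z
  field_simp

set_option maxHeartbeats 1000000 in
/-- The key telescoping identity for the terms of the series. -/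
lemma qt_rec (q a b c : ℂ) (hq1 : ‖q‖ < 1) (ha : a ≠ 0) (hb : b ≠ 0)
    (hcj : ∀ j : ℕ, (1:ℂ) - c * q ^ j ≠ 0) (n : ℕ) :
    (1 - c) * (1 - c / (a * b)) * qt q a b c n
      - (1 - c / a) * (1 - c / b) * qt q a b (c * q) n
      = (1 - c) * ((1 - q ^ n) * qt q a b c n - (1 - q ^ (n + 1)) * qt q a b c (n + 1)) := by
  have hcn : (1:ℂ) - c * q ^ n ≠ 0 := hcj n
  have E1 := qt_step q a b c hq1 ha hb hcj n
  have E2 := qt_shift q a b c hq1 ha hb hcj n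
  apply mul_left_cancel₀ hcn
  rw [pow_succ']
  linear_combination (norm := (field_simp; ring))
    (-(1 - c / a) * (1 - c / b)) * E2 + (1 - c) * E1

/- ### Summability -/

lemma qt_norm_le (q a b c : ℂ) (n : ℕ) {Ka Kb δc δq : ℝ} (hδc : 0 < δc) (hδq : 0 < δq)
    (hKa : ‖poch q a n‖ ≤ Ka) (hKb : ‖poch q b n‖ ≤ Kb)
    (hδc' : δc ≤ ‖poch q c n‖) (hδq' : δq ≤ ‖poch q q n‖) :
    ‖qt q a b c n‖ ≤ Ka * Kb / (δc * δq) * ‖c / (a * b)‖ ^ n := by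
  rw [qt, norm_mul, norm_div, norm_mul, norm_mul, norm_pow]
  have hKa0 : 0 ≤ Ka := (norm_nonneg _).trans hKa
  have hKb0 : 0 ≤ Kb := (norm_nonneg _).trans hKb
  gcongr

lemma summable_qt (q a b c : ℂ) (hq1 : ‖q‖ < 1) (habc : ‖c / (a * b)‖ < 1)
    (hcj : ∀ j : ℕ, (1:ℂ) - c * q ^ j ≠ 0) : Summable (qt q a b c) := by
  obtain ⟨δc, hδc, hδc'⟩ := exists_poch_lb q c hq1 hcj
  obtain ⟨δq, hδq, hδq'⟩ := exists_poch_lb q q hq1 (q_factors_ne q hq1)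
  set Ka := Real.exp (‖a‖ * (1 - ‖q‖)⁻¹)
  set Kb := Real.exp (‖b‖ * (1 - ‖q‖)⁻¹)
  apply Summable.of_norm_bounded (g := fun n => Ka * Kb / (δc * δq) * ‖c / (a * b)‖ ^ n)
    ((summable_geometric_of_lt_one (norm_nonneg _) habc).mul_left _)
  intro n
  exact qt_norm_le q a b c n hδc hδq (poch_norm_le q a hq1 n) (poch_norm_le q b hq1 n)
    (hδc' n) (hδq' n)

lemma cq_factors_ne (q c : ℂ) (hcj : ∀ j : ℕ, (1:ℂ) - c * q ^ j ≠ 0) (j : ℕ) :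
    (1:ℂ) - c * q * q ^ j ≠ 0 := by
  have := hcj (j + 1)
  rwa [pow_succ', ← mul_assoc] at this

lemma norm_cq_lt (q a b c : ℂ) (hq1 : ‖q‖ < 1) (habc : ‖c / (a * b)‖ < 1) :
    ‖c * q / (a * b)‖ < 1 := by
  have h : c * q / (a * b) = c / (a * b) * q := by ring
  rw [h, norm_mul]
  calc ‖c / (a * b)‖ * ‖q‖ ≤ 1 * ‖q‖ := by
        apply mul_le_mul_of_nonneg_right habc.le (norm_nonneg q)
    _ = ‖q‖ := one_mul _
    _ < 1 := hq1

/- ### The contiguous relation at the level of sums -/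

lemma qS_rec (q a b c : ℂ) (hq1 : ‖q‖ < 1) (ha : a ≠ 0) (hb : b ≠ 0)
    (habc : ‖c / (a * b)‖ < 1) (hcj : ∀ j : ℕ, (1:ℂ) - c * q ^ j ≠ 0) :
    (1 - c) * (1 - c / (a * b)) * qS q a b c
      = (1 - c / a) * (1 - c / b) * qS q a b (c * q) := by
  have hs1 : Summable (qt q a b c) := summable_qt q a b c hq1 habc hcj
  have hs2 : Summable (qt q a b (c * q)) :=
    summable_qt q a b (c * q) hq1 (norm_cq_lt q a b c hq1 habc) (cq_factors_ne q c hcj)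
  set u : ℕ → ℂ := fun n => (1 - q ^ n) * qt q a b c n with hu_def
  have hu : Summable u := by
    apply Summable.of_norm_bounded (g := fun n => 2 * ‖qt q a b c n‖) (hs1.norm.mul_left 2)
    intro n
    rw [hu_def, norm_mul]
    have h1 : ‖(1:ℂ) - q ^ n‖ ≤ 2 := by
      calc ‖(1:ℂ) - q ^ n‖ ≤ ‖(1:ℂ)‖ + ‖q ^ n‖ := norm_sub_le _ _
        _ ≤ 1 + 1 := by
            rw [norm_one, norm_pow]
            have := pow_le_one₀ (norm_nonneg q) hq1.le (n := n)
            linarith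
        _ = 2 := by norm_num
    exact mul_le_mul_of_nonneg_right h1 (norm_nonneg _)
  have hu' : Summable (fun n => u (n + 1)) := (summable_nat_add_iff 1).2 hu
  have key : ∑' n, ((1 - c) * (1 - c / (a * b)) * qt q a b c n
      - (1 - c / a) * (1 - c / b) * qt q a b (c * q) n) = 0 := by
    calc ∑' n, ((1 - c) * (1 - c / (a * b)) * qt q a b c n
          - (1 - c / a) * (1 - c / b) * qt q a b (c * q) n)
        = ∑' n, (1 - c) * (u n - u (n + 1)) :=
          tsum_congr (fun n => qt_rec q a b c hq1 ha hb hcj n)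
      _ = (1 - c) * ∑' n, (u n - u (n + 1)) := tsum_mul_left
      _ = (1 - c) * (∑' n, u n - ∑' n, u (n + 1)) := by rw [Summable.tsum_sub hu hu']
      _ = (1 - c) * (u 0) := by rw [Summable.tsum_eq_zero_add hu]; ring
      _ = 0 := by simp [hu_def]
  rw [qS, qS, ← tsum_mul_left, ← tsum_mul_left]
  rw [← sub_eq_zero, ← Summable.tsum_sub (hs1.mul_left _) (hs2.mul_left _)]
  exact key

/- ### Iterating the contiguous relation -/

lemma cqN_factors_ne (q c : ℂ) (hcj : ∀ j : ℕ, (1:ℂ) - c * q ^ j ≠ 0) (N j : ℕ) :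
    (1:ℂ) - c * q ^ N * q ^ j ≠ 0 := by
  have := hcj (N + j)
  rwa [pow_add, ← mul_assoc] at this

lemma norm_cqN_eq (q a b c : ℂ) (N : ℕ) :
    ‖c * q ^ N / (a * b)‖ = ‖c / (a * b)‖ * ‖q‖ ^ N := by
  rw [show c * q ^ N / (a * b) = c / (a * b) * q ^ N by ring, norm_mul, norm_pow]

lemma norm_cqN_lt (q a b c : ℂ) (hq1 : ‖q‖ < 1) (habc : ‖c / (a * b)‖ < 1) (N : ℕ) :
    ‖c * q ^ N / (a * b)‖ < 1 := by
  rw [norm_cqN_eq]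
  calc ‖c / (a * b)‖ * ‖q‖ ^ N ≤ ‖c / (a * b)‖ * 1 :=
        mul_le_mul_of_nonneg_left (pow_le_one₀ (norm_nonneg q) hq1.le) (norm_nonneg _)
    _ = ‖c / (a * b)‖ := mul_one _
    _ < 1 := habc

lemma qS_iter (q a b c : ℂ) (hq1 : ‖q‖ < 1) (ha : a ≠ 0) (hb : b ≠ 0)
    (habc : ‖c / (a * b)‖ < 1) (hcj : ∀ j : ℕ, (1:ℂ) - c * q ^ j ≠ 0) (N : ℕ) :
    qS q a b c * (poch q c N * poch q (c / (a * b)) N)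
      = poch q (c / a) N * poch q (c / b) N * qS q a b (c * q ^ N) := by
  induction N with
  | zero => simp [poch]
  | succ N ih =>
    have hrec := qS_rec q a b (c * q ^ N) hq1 ha hb (norm_cqN_lt q a b c hq1 habc N)
      (cqN_factors_ne q c hcj N)
    have e1 : c * q ^ N / (a * b) = c / (a * b) * q ^ N := by ring
    have e2 : c * q ^ N / a = c / a * q ^ N := by ring
    have e3 : c * q ^ N / b = c / b * q ^ N := by ring
    have e4 : c * q ^ N * q = c * q ^ (N + 1) := by rw [pow_succ]; ring
    rw [e1, e2, e3, e4] at hrec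
    rw [poch_succ, poch_succ, poch_succ, poch_succ]
    linear_combination ((1 - c * q ^ N) * (1 - c / (a * b) * q ^ N)) * ih
      + (poch q (c / a) N * poch q (c / b) N) * hrec

/- ### The limit `S(c qᴺ) → 1` -/

lemma qS_tendsto_one (q a b c : ℂ) (hq1 : ‖q‖ < 1) (habc : ‖c / (a * b)‖ < 1)
    (hcj : ∀ j : ℕ, (1:ℂ) - c * q ^ j ≠ 0) :
    Tendsto (fun N => qS q a b (c * q ^ N)) atTop (𝓝 1) := by
  obtain ⟨δq, hδq, hδq'⟩ := exists_poch_lb q q hq1 (q_factors_ne q hq1)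
  set Ka := Real.exp (‖a‖ * (1 - ‖q‖)⁻¹) with hKa
  set Kb := Real.exp (‖b‖ * (1 - ‖q‖)⁻¹) with hKb
  set r := ‖c / (a * b)‖ with hr
  set C := Ka * Kb / (1/2 * δq) with hC
  have hC0 : 0 < C := by positivity
  have hr0 : 0 ≤ r := norm_nonneg _
  have htail : Tendsto (fun N => ∑' k : ℕ, ‖c‖ * ‖q‖ ^ (k + N)) atTop (𝓝 0) :=
    tendsto_sum_nat_add (fun j => ‖c‖ * ‖q‖ ^ j)
  have hgeom : Tendsto (fun N : ℕ => C * (1 - r)⁻¹ * (r * ‖q‖ ^ N)) atTop (𝓝 0) := by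
    have : Tendsto (fun N : ℕ => ‖q‖ ^ N) atTop (𝓝 0) :=
      tendsto_pow_atTop_nhds_zero_of_lt_one (norm_nonneg q) hq1
    simpa using ((this.const_mul r).const_mul (C * (1 - r)⁻¹))
  have hbound : ∀ᶠ N in atTop, ‖qS q a b (c * q ^ N) - 1‖ ≤ C * (1 - r)⁻¹ * (r * ‖q‖ ^ N) := by
    filter_upwards [htail.eventually_le_const (by norm_num : (0:ℝ) < 1/2)] with N hN
    set c' := c * q ^ N with hc'
    have hρeq : ‖c' / (a * b)‖ = r * ‖q‖ ^ N := norm_cqN_eq q a b c N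
    set ρ := ‖c' / (a * b)‖ with hρ
    have hρr : ρ ≤ r := by
      rw [hρeq]
      calc r * ‖q‖ ^ N ≤ r * 1 :=
            mul_le_mul_of_nonneg_left (pow_le_one₀ (norm_nonneg q) hq1.le) hr0
        _ = r := mul_one _
    have hρ1 : ρ < 1 := lt_of_le_of_lt hρr habc
    have hρ0 : 0 ≤ ρ := norm_nonneg _
    have hcj' := cqN_factors_ne q c hcj N
    have hs : Summable (qt q a b c') := summable_qt q a b c' hq1 hρ1 hcj'
    have hhalf : ∀ n, (1/2 : ℝ) ≤ ‖poch q c' n‖ := by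
      apply poch_half_lb q c' hq1
      calc ∑' j : ℕ, ‖c'‖ * ‖q‖ ^ j = ∑' j : ℕ, ‖c‖ * ‖q‖ ^ (j + N) := by
            congr 1; funext j
            rw [hc', norm_mul, norm_pow, pow_add]; ring
        _ ≤ 1/2 := hN
    have hterm : ∀ n, ‖qt q a b c' n‖ ≤ C * ρ ^ n := fun n => by
      have := qt_norm_le q a b c' n (by norm_num : (0:ℝ) < 1/2) hδq
        (poch_norm_le q a hq1 n) (poch_norm_le q b hq1 n) (hhalf n) (hδq' n)
      rwa [← hKa, ← hKb, ← hρ, ← hC] at this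
    have h1 : qS q a b c' - 1 = ∑' n, qt q a b c' (n + 1) := by
      rw [qS, Summable.tsum_eq_zero_add hs, qt_zero]; ring
    rw [h1]
    have hs' : Summable (fun n => qt q a b c' (n + 1)) := (summable_nat_add_iff 1).2 hs
    calc ‖∑' n, qt q a b c' (n + 1)‖ ≤ ∑' n, ‖qt q a b c' (n + 1)‖ :=
          norm_tsum_le_tsum_norm hs'.norm
      _ ≤ ∑' n : ℕ, C * ρ * ρ ^ n := by
          apply Summable.tsum_le_tsum _ hs'.norm
            (((summable_geometric_of_lt_one hρ0 hρ1).mul_left _))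
          intro n
          calc ‖qt q a b c' (n + 1)‖ ≤ C * ρ ^ (n + 1) := hterm (n + 1)
            _ = C * ρ * ρ ^ n := by rw [pow_succ]; ring
      _ = C * ρ * (1 - ρ)⁻¹ := by
          rw [tsum_mul_left, tsum_geometric_of_lt_one hρ0 hρ1]
      _ ≤ C * (1 - r)⁻¹ * (r * ‖q‖ ^ N) := by
          rw [← hρeq]
          have h2 : (1 - ρ)⁻¹ ≤ (1 - r)⁻¹ := by
            apply inv_anti₀ (by linarith) (by linarith)
          calc C * ρ * (1 - ρ)⁻¹ ≤ C * ρ * (1 - r)⁻¹ :=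
                mul_le_mul_of_nonneg_left h2 (by positivity)
            _ = C * (1 - r)⁻¹ * ρ := by ring
  have h0 : Tendsto (fun N => qS q a b (c * q ^ N) - 1) atTop (𝓝 0) :=
    squeeze_zero_norm' hbound hgeom
  have := h0.add_const 1
  simpa using this

/- ### The q-Gauss summation -/

/-- The q-Gauss summation:
`₂φ₁(a,b;c;q,c/(ab)) = (c/a;q)_∞ (c/b;q)_∞ / ((c;q)_∞ (c/(ab);q)_∞)`. -/
theorem stmt3 (q a b c : ℂ) (hq0 : 0 < ‖q‖) (hq1 : ‖q‖ < 1)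
    (ha : a ≠ 0) (hb : b ≠ 0) (habc : ‖c / (a * b)‖ < 1)
    (hc : ∀ j : ℕ, c * q ^ j ≠ 1) :
    ∑' n : ℕ, poch q a n * poch q b n / (poch q c n * poch q q n) * (c / (a * b)) ^ n =
      (∏' j : ℕ, (1 - c / a * q ^ j)) * (∏' j : ℕ, (1 - c / b * q ^ j)) /
        ((∏' j : ℕ, (1 - c * q ^ j)) * ∏' j : ℕ, (1 - c / (a * b) * q ^ j)) := by
  have hcj : ∀ j : ℕ, (1:ℂ) - c * q ^ j ≠ 0 := fun j => by
    rw [sub_ne_zero]; exact fun h => hc j h.symm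
  have hzj : ∀ j : ℕ, (1:ℂ) - (c / (a * b)) * q ^ j ≠ 0 := fun j => by
    apply one_sub_ne
    rw [norm_mul, norm_pow]
    calc ‖c / (a * b)‖ * ‖q‖ ^ j ≤ ‖c / (a * b)‖ * 1 :=
          mul_le_mul_of_nonneg_left (pow_le_one₀ (norm_nonneg q) hq1.le) (norm_nonneg _)
      _ = ‖c / (a * b)‖ := mul_one _
      _ < 1 := habc
  have T1 : Tendsto (fun N => qS q a b c * (poch q c N * poch q (c / (a * b)) N)) atTop
      (𝓝 (qS q a b c * ((∏' j : ℕ, (1 - c * q ^ j)) * ∏' j : ℕ, (1 - c / (a * b) * q ^ j)))) :=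
    tendsto_const_nhds.mul ((tendsto_poch q c hq1).mul (tendsto_poch q (c / (a * b)) hq1))
  have T2 : Tendsto (fun N => poch q (c / a) N * poch q (c / b) N * qS q a b (c * q ^ N))
      atTop (𝓝 ((∏' j : ℕ, (1 - c / a * q ^ j)) * (∏' j : ℕ, (1 - c / b * q ^ j)) * 1)) :=
    ((tendsto_poch q (c / a) hq1).mul (tendsto_poch q (c / b) hq1)).mul
      (qS_tendsto_one q a b c hq1 habc hcj)
  have heq : qS q a b c * ((∏' j : ℕ, (1 - c * q ^ j)) * ∏' j : ℕ, (1 - c / (a * b) * q ^ j))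
      = (∏' j : ℕ, (1 - c / a * q ^ j)) * (∏' j : ℕ, (1 - c / b * q ^ j)) * 1 :=
    tendsto_nhds_unique (T1.congr (fun N => qS_iter q a b c hq1 ha hb habc hcj N)) T2
  have hPC0 := tprod_ne_zero q c hq1 hcj
  have hPZ0 := tprod_ne_zero q (c / (a * b)) hq1 hzj
  have hL : (∑' n : ℕ, poch q a n * poch q b n / (poch q c n * poch q q n)
      * (c / (a * b)) ^ n) = qS q a b c := rfl
  rw [hL, eq_div_iff (mul_ne_zero hPC0 hPZ0)]
  linear_combination heq
end

section
/- With F_k(μ) = Σ_{N_0,…,N_{k−1} ≥ 0} q^{Σ_{j=0}^{k−1} N_j² + μN_0 + (μ+1)Σ_{j=1}^{k−1} N_j} / ((q)_{N_0+μ}(q)_{N_0}(q)_{N_1−N_0}⋯(q)_{N_{k−1}−N_{k−2}}) (convention 1/(q)_n = 0 for n < 0), one has for every integer μ and every k ≥ 1: F_k(μ−1) − q^μ F_k(−μ−1) = (1 − q^μ)/(q)_∞. -/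
set_option maxHeartbeats 1000000

open Filter Topology


/-- `(q)_n = ∏_{j=1}^n (1 - q^j)`. -/
noncomputable def qpC (q : ℂ) (n : ℕ) : ℂ := ∏ j ∈ Finset.range n, (1 - q ^ (j + 1))

/-- `1/(q)_n`, with the convention that it is `0` for `n < 0`. -/
noncomputable def qpInv (q : ℂ) (n : ℤ) : ℂ := if n < 0 then 0 else (qpC q n.toNat)⁻¹

/-- `F_k(μ) = Σ_{N_0,…,N_{k-1} ≥ 0} q^{Σ N_j² + μN_0 + (μ+1)Σ_{j≥1}N_j} /
((q)_{N_0+μ}(q)_{N_0}(q)_{N_1-N_0}⋯(q)_{N_{k-1}-N_{k-2}})`. -/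
noncomputable def FF (q : ℂ) (k : ℕ) (μ : ℤ) : ℂ :=
  ∑' N : Fin k → ℕ,
    (let NN : ℕ → ℕ := fun j => if h : j < k then N ⟨j, h⟩ else 0
     q ^ ((∑ j ∈ Finset.range k, (NN j : ℤ) ^ 2) + μ * (NN 0 : ℤ)
            + (μ + 1) * ∑ j ∈ Finset.Ico 1 k, (NN j : ℤ)) *
       (qpInv q ((NN 0 : ℤ) + μ) * qpInv q (NN 0) *
         ∏ j ∈ Finset.Ico 1 k, qpInv q ((NN j : ℤ) - (NN (j - 1) : ℤ))))


section Basic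
variable {q : ℂ} (hq : ‖q‖ < 1) (hq0 : q ≠ 0)

lemma qpInv_of_neg {n : ℤ} (h : n < 0) : qpInv q n = 0 := if_pos h

lemma qpInv_zero : qpInv q 0 = 1 := by simp [qpInv, qpC]

lemma qpInv_natCast (n : ℕ) : qpInv q (n : ℤ) = (qpC q n)⁻¹ := by
  simp [qpInv]

lemma one_sub_zpow_ne (hq : ‖q‖ < 1) (hq0 : q ≠ 0) {n : ℤ} (hn : n ≠ 0) : 1 - q ^ n ≠ 0 := by
  intro h
  have hqn : q ^ n = 1 := by linear_combination -h
  have h1 : ‖q‖ ^ n = 1 := by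
    rw [← norm_zpow, hqn, norm_one]
  have h0 : (0:ℝ) < ‖q‖ := norm_pos_iff.2 hq0
  rcases lt_trichotomy n 0 with h2 | h2 | h2
  · have : (1:ℝ) < ‖q‖ ^ n := by
      calc (1:ℝ) = ‖q‖ ^ (0:ℤ) := by simp
      _ < ‖q‖ ^ n := by
        apply zpow_lt_zpow_right_of_lt_one₀ h0 hq h2
    rw [h1] at this; exact lt_irrefl _ this
  · exact hn h2
  · have : ‖q‖ ^ n < 1 := by
      calc ‖q‖ ^ n < ‖q‖ ^ (0:ℤ) := zpow_lt_zpow_right_of_lt_one₀ h0 hq h2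
      _ = 1 := by simp
    rw [h1] at this; exact lt_irrefl _ this

lemma qpInv_sub_one (hq : ‖q‖ < 1) (hq0 : q ≠ 0) (n : ℤ) : qpInv q (n - 1) = (1 - q ^ n) * qpInv q n := by
  rcases lt_trichotomy n 0 with h | h | h
  · rw [qpInv_of_neg h, qpInv_of_neg (by omega), mul_zero]
  · subst h; simp [qpInv_of_neg, qpInv_zero]
  · obtain ⟨m, rfl⟩ : ∃ m : ℕ, n = (m : ℤ) + 1 := ⟨(n-1).toNat, by omega⟩
    have h1 : ((m : ℤ) + 1 - 1) = (m : ℤ) := by ring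
    rw [h1, qpInv_natCast]
    have h2 : ((m : ℤ) + 1) = ((m + 1 : ℕ) : ℤ) := by push_cast; ring
    rw [h2, qpInv_natCast, zpow_natCast]
    have h3 : qpC q (m + 1) = qpC q m * (1 - q ^ (m + 1)) := Finset.prod_range_succ _ _
    rw [h3, mul_inv]
    have h4 : (1 - q ^ (m + 1)) ≠ 0 := by
      intro h; apply one_sub_zpow_ne hq hq0 (n := (m:ℤ)+1) (by omega)
      rw [show ((m:ℤ)+1) = ((m+1 : ℕ) : ℤ) by push_cast; ring, zpow_natCast]; exact h
    rw [mul_comm ((qpC q m)⁻¹), ← mul_assoc, mul_inv_cancel₀ h4, one_mul]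

lemma qpInv_rec (hq : ‖q‖ < 1) (hq0 : q ≠ 0) (n : ℤ) : qpInv q n = qpInv q (n - 1) + q ^ n * qpInv q n := by
  rw [qpInv_sub_one hq hq0]; ring

end Basic

/-- `exp(-(x/(1-r))) ≤ 1 - x` for `0 ≤ x ≤ r < 1`. -/
lemma exp_le_one_sub_aux {x r : ℝ} (hx : 0 ≤ x) (hxr : x ≤ r) (hr : r < 1) :
    Real.exp (-(x / (1 - r))) ≤ 1 - x := by
  have h1 : (0:ℝ) < 1 - r := by linarith
  set t := x / (1 - r) with ht
  have htx : t * (1 - r) = x := div_mul_cancel₀ x h1.ne'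
  have ht0 : 0 ≤ t := div_nonneg hx h1.le
  have h2 : 1 + t ≤ Real.exp t := by simpa [add_comm] using Real.add_one_le_exp t
  have h3 : Real.exp (-t) ≤ (1 + t)⁻¹ := by
    rw [Real.exp_neg]
    exact inv_anti₀ (by linarith) h2
  refine h3.trans ?_
  rw [inv_le_iff_one_le_mul₀ (by linarith)]
  nlinarith [mul_nonneg hx (sub_nonneg.2 hxr)]

lemma norm_qpC_ge {q : ℂ} (hq : ‖q‖ < 1) (n : ℕ) :
    Real.exp (-(‖q‖ / (1 - ‖q‖) ^ 2)) ≤ ‖qpC q n‖ := by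
  set r := ‖q‖ with hr
  have hr0 : 0 ≤ r := norm_nonneg q
  have h1 : (0:ℝ) < 1 - r := by linarith
  have step1 : ∑ j ∈ Finset.range n, r ^ (j + 1) / (1 - r) ≤ r / (1 - r) ^ 2 := by
    rw [← Finset.sum_div]
    rw [div_le_div_iff₀ h1 (by positivity)]
    have hgeom : ∑ j ∈ Finset.range n, r ^ (j + 1) ≤ r / (1 - r) := by
      have : ∑ j ∈ Finset.range n, r ^ (j + 1) = r * ∑ j ∈ Finset.range n, r ^ j := by
        rw [Finset.mul_sum]; exact Finset.sum_congr rfl fun j _ => by ring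
      rw [this]
      have hg : ∑ j ∈ Finset.range n, r ^ j ≤ (1 - r)⁻¹ := by
        rw [← tsum_geometric_of_lt_one hr0 hq]
        exact Summable.sum_le_tsum _ (fun i _ => pow_nonneg hr0 i) (summable_geometric_of_lt_one hr0 hq)
      calc r * ∑ j ∈ Finset.range n, r ^ j ≤ r * (1 - r)⁻¹ :=
            mul_le_mul_of_nonneg_left hg hr0
        _ = r / (1 - r) := by ring
    calc (∑ j ∈ Finset.range n, r ^ (j + 1)) * (1 - r) ^ 2
        ≤ (r / (1 - r)) * (1 - r) ^ 2 :=
          mul_le_mul_of_nonneg_right hgeom (by positivity)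
      _ = r * (1 - r) := by field_simp
  calc Real.exp (-(r / (1 - r) ^ 2))
      ≤ Real.exp (-(∑ j ∈ Finset.range n, r ^ (j + 1) / (1 - r))) := by
        apply Real.exp_le_exp.2; linarith
    _ = ∏ j ∈ Finset.range n, Real.exp (-(r ^ (j + 1) / (1 - r))) := by
        rw [← Real.exp_sum]; congr 1; rw [← Finset.sum_neg_distrib]
    _ ≤ ∏ j ∈ Finset.range n, (1 - r ^ (j + 1)) := by
        apply Finset.prod_le_prod (fun j _ => (Real.exp_pos _).le)
        intro j _
        exact exp_le_one_sub_aux (by positivity)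
          (by calc r ^ (j+1) ≤ r ^ 1 := pow_le_pow_of_le_one hr0 hq.le (by omega)
                _ = r := pow_one r) hq
    _ ≤ ∏ j ∈ Finset.range n, ‖1 - q ^ (j + 1)‖ := by
        apply Finset.prod_le_prod
        · intro j _
          have : r ^ (j+1) ≤ 1 := pow_le_one₀ hr0 hq.le
          linarith
        · intro j _
          calc 1 - r ^ (j+1) = ‖(1:ℂ)‖ - ‖q ^ (j+1)‖ := by simp [hr, norm_pow]
            _ ≤ ‖1 - q ^ (j + 1)‖ := norm_sub_norm_le _ _
    _ = ‖qpC q n‖ := (norm_prod _ _).symm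

lemma norm_qpInv_le {q : ℂ} (hq : ‖q‖ < 1) (n : ℤ) :
    ‖qpInv q n‖ ≤ (Real.exp (-(‖q‖ / (1 - ‖q‖) ^ 2)))⁻¹ := by
  by_cases h : n < 0
  · rw [qpInv, if_pos h, norm_zero]; positivity
  · rw [qpInv, if_neg h, norm_inv]
    exact inv_anti₀ (Real.exp_pos _) (norm_qpC_ge hq _)

section Star
variable {q : ℂ}

lemma key_pt (hq : ‖q‖ < 1) (hq0 : q ≠ 0) (n : ℕ) (μ m : ℤ) :
    q ^ ((n:ℤ)^2 + μ*n) * (qpInv q (n+μ) * qpInv q n * qpInv q (m + 1 - n))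
    = q ^ ((n:ℤ)^2 + μ*n) * (qpInv q (n+μ) * qpInv q n * qpInv q (m - n))
    + q ^ (m+1) * (q ^ ((n:ℤ)^2 + (μ-1)*n) * (qpInv q (n+(μ-1)) * qpInv q n * qpInv q (m + 1 - n)))
    + q ^ (m+1+μ) * (q ^ ((n:ℤ)^2 + μ*n) * (qpInv q (n+μ) * qpInv q n * qpInv q (m + 1 - n))) := by
  have h1 : qpInv q (m - n) = (1 - q ^ (m + 1 - (n:ℤ))) * qpInv q (m + 1 - n) := by
    have h := qpInv_sub_one hq hq0 (m + 1 - n)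
    rw [show m + 1 - (n:ℤ) - 1 = m - n by ring] at h; exact h
  have h2 : qpInv q ((n:ℤ) + (μ - 1)) = (1 - q ^ ((n:ℤ) + μ)) * qpInv q (n + μ) := by
    have h := qpInv_sub_one hq hq0 ((n:ℤ) + μ)
    rw [show (n:ℤ) + μ - 1 = n + (μ-1) by ring] at h; exact h
  rw [h1, h2]
  set X := qpInv q ((n:ℤ)+μ)
  set Y := qpInv q (n:ℤ)
  set Z := qpInv q (m+1-(n:ℤ))
  have e1 : q ^ ((n:ℤ)^2 + μ*n) * q ^ (m + 1 - (n:ℤ))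
      = q ^ (m+1) * q ^ ((n:ℤ)^2 + (μ-1)*n) := by
    rw [← zpow_add₀ hq0, ← zpow_add₀ hq0]; congr 1; ring
  have e2 : q ^ (m+1) * q ^ ((n:ℤ)^2 + (μ-1)*n) * q ^ ((n:ℤ) + μ)
      = q ^ (m+1+μ) * q ^ ((n:ℤ)^2 + μ*n) := by
    rw [← zpow_add₀ hq0, ← zpow_add₀ hq0, ← zpow_add₀ hq0]; congr 1; ring
  linear_combination (X*Y*Z) * e1 + (X*Y*Z) * e2

lemma star_id (hq : ‖q‖ < 1) (hq0 : q ≠ 0) :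
    ∀ (N : ℕ) (μ : ℤ),
    ∑ n ∈ Finset.range (N+1),
        q ^ ((n:ℤ)^2 + μ*n) * (qpInv q (n+μ) * qpInv q n * qpInv q ((N:ℤ) - n))
      = qpInv q ((N:ℤ) + μ) * qpInv q N := by
  intro N
  induction N with
  | zero =>
    intro μ
    simp [qpInv_zero]
  | succ N ihN =>
    -- inner induction on t ≥ μ + (N+1)
    have aux : ∀ (t : ℕ) (μ : ℤ), μ + (N+1) ≤ t →
        ∑ n ∈ Finset.range (N+1+1),
          q ^ ((n:ℤ)^2 + μ*n) * (qpInv q (n+μ) * qpInv q n * qpInv q (((N+1:ℕ):ℤ) - n))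
        = qpInv q (((N+1:ℕ):ℤ) + μ) * qpInv q ((N+1:ℕ):ℤ) := by
      intro t
      induction t with
      | zero =>
        intro μ hμ
        rw [Finset.sum_range_succ]
        have hz : ∀ n ∈ Finset.range (N+1),
            q ^ ((n:ℤ)^2 + μ*n) * (qpInv q (n+μ) * qpInv q n * qpInv q (((N+1:ℕ):ℤ) - n)) = 0 := by
          intro n hn
          rw [Finset.mem_range] at hn
          rw [qpInv_of_neg (show (n:ℤ)+μ < 0 by omega)]
          ring
        rw [Finset.sum_eq_zero hz, zero_add]
        rcases eq_or_lt_of_le hμ with h | h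
        · have hμ' : μ = -((N:ℤ)+1) := by omega
          subst hμ'
          have hexp : ((N+1:ℕ):ℤ)^2 + (-((N:ℤ)+1))*((N+1:ℕ):ℤ) = 0 := by push_cast; ring
          rw [hexp]
          rw [show ((N+1:ℕ):ℤ) + -((N:ℤ)+1) = 0 by push_cast; ring]
          rw [show ((N+1:ℕ):ℤ) - ((N+1:ℕ):ℤ) = 0 by ring]
          simp [qpInv_zero]
        · rw [qpInv_of_neg (show ((N+1:ℕ):ℤ) + μ < 0 by push_cast at h ⊢; omega)]
          ring
      | succ t iht =>
        intro μ hμ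
        by_cases hle : μ + (N+1) ≤ t
        · exact iht μ hle
        have hμt : μ + (N+1) = t+1 := by omega
        have hne : ((N:ℤ)+1+μ) ≠ 0 := by omega
        -- the three-term recurrence
        have key : ∑ n ∈ Finset.range (N+1+1),
            q ^ ((n:ℤ)^2 + μ*n) * (qpInv q (n+μ) * qpInv q n * qpInv q (((N+1:ℕ):ℤ) - n))
            = (∑ n ∈ Finset.range (N+1+1),
                q ^ ((n:ℤ)^2 + μ*n) * (qpInv q (n+μ) * qpInv q n * qpInv q ((N:ℤ) - n)))
            + q ^ ((N:ℤ)+1) * (∑ n ∈ Finset.range (N+1+1),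
                q ^ ((n:ℤ)^2 + (μ-1)*n) * (qpInv q (n+(μ-1)) * qpInv q n * qpInv q (((N+1:ℕ):ℤ) - n)))
            + q ^ ((N:ℤ)+1+μ) * (∑ n ∈ Finset.range (N+1+1),
                q ^ ((n:ℤ)^2 + μ*n) * (qpInv q (n+μ) * qpInv q n * qpInv q (((N+1:ℕ):ℤ) - n))) := by
          rw [Finset.mul_sum, Finset.mul_sum, ← Finset.sum_add_distrib, ← Finset.sum_add_distrib]
          apply Finset.sum_congr rfl
          intro n _
          have := key_pt hq hq0 n μ (N:ℤ)
          rw [show ((N+1:ℕ):ℤ) = (N:ℤ)+1 by push_cast; ring]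
          exact this
        -- first sum: drop the last (zero) term and apply outer IH
        have first : ∑ n ∈ Finset.range (N+1+1),
            q ^ ((n:ℤ)^2 + μ*n) * (qpInv q (n+μ) * qpInv q n * qpInv q ((N:ℤ) - n))
            = qpInv q ((N:ℤ) + μ) * qpInv q N := by
          rw [Finset.sum_range_succ]
          rw [qpInv_of_neg (show (N:ℤ) - ((N+1:ℕ):ℤ) < 0 by push_cast; omega)]
          rw [ihN μ]; ring
        -- second sum: inner IH at μ-1
        have second : ∑ n ∈ Finset.range (N+1+1),
            q ^ ((n:ℤ)^2 + (μ-1)*n) * (qpInv q (n+(μ-1)) * qpInv q n * qpInv q (((N+1:ℕ):ℤ) - n))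
            = qpInv q (((N+1:ℕ):ℤ) + (μ-1)) * qpInv q ((N+1:ℕ):ℤ) := iht (μ-1) (by omega)
        rw [first, second] at key
        -- now solve for the sum
        set S := ∑ n ∈ Finset.range (N+1+1),
            q ^ ((n:ℤ)^2 + μ*n) * (qpInv q (n+μ) * qpInv q n * qpInv q (((N+1:ℕ):ℤ) - n)) with hS
        have hfac : (1 - q ^ ((N:ℤ)+1+μ)) * S
            = qpInv q ((N:ℤ) + μ) * qpInv q N
              + q ^ ((N:ℤ)+1) * (qpInv q (((N+1:ℕ):ℤ) + (μ-1)) * qpInv q ((N+1:ℕ):ℤ)) := by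
          linear_combination key
        have hgoal : (1 - q ^ ((N:ℤ)+1+μ)) * (qpInv q (((N+1:ℕ):ℤ) + μ) * qpInv q ((N+1:ℕ):ℤ))
            = qpInv q ((N:ℤ) + μ) * qpInv q N
              + q ^ ((N:ℤ)+1) * (qpInv q (((N+1:ℕ):ℤ) + (μ-1)) * qpInv q ((N+1:ℕ):ℤ)) := by
          have hc : ((N+1:ℕ):ℤ) = (N:ℤ)+1 := by push_cast; ring
          rw [hc]
          have r1 : qpInv q ((N:ℤ) + μ) = (1 - q ^ ((N:ℤ)+1+μ)) * qpInv q ((N:ℤ)+1+μ) := by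
            have h := qpInv_sub_one hq hq0 ((N:ℤ)+1+μ)
            rw [show (N:ℤ)+1+μ-1 = (N:ℤ)+μ by ring] at h; exact h
          have r2 : qpInv q ((N:ℤ)+1+(μ-1)) = (1 - q ^ ((N:ℤ)+1+μ)) * qpInv q ((N:ℤ)+1+μ) := by
            have h := qpInv_sub_one hq hq0 ((N:ℤ)+1+μ)
            rw [show (N:ℤ)+1+μ-1 = (N:ℤ)+1+(μ-1) by ring] at h; exact h
          have r3 : qpInv q ((N:ℤ)+1) = qpInv q (N:ℤ) + q ^ ((N:ℤ)+1) * qpInv q ((N:ℤ)+1) := by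
            have h := qpInv_rec hq hq0 ((N:ℤ)+1)
            rw [show (N:ℤ)+1-1 = (N:ℤ) by ring] at h; exact h
          rw [r1, r2]
          linear_combination (1 - q ^ ((N:ℤ)+1+μ)) * qpInv q ((N:ℤ)+1+μ) * r3
        have := mul_left_cancel₀ (one_sub_zpow_ne hq hq0 hne) (hfac.trans hgoal.symm)
        exact this
    intro μ
    exact aux (μ + (N+1)).toNat μ (by omega)

end Star

section Lim
variable {q : ℂ}

lemma one_sub_pow_ne' (hq : ‖q‖ < 1) (j : ℕ) : (1:ℂ) - q ^ (j+1) ≠ 0 := by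
  intro h
  have h1 : q ^ (j+1) = 1 := by linear_combination -h
  have h2 : ‖q ^ (j+1)‖ < 1 := by
    rw [norm_pow]; exact pow_lt_one₀ (norm_nonneg q) hq (by omega)
  rw [h1, norm_one] at h2; exact lt_irrefl _ h2

lemma log_summable (hq : ‖q‖ < 1) :
    Summable (fun j : ℕ => Complex.log (1 - q ^ (j+1))) := by
  set r := ‖q‖ with hr
  have hr0 : 0 ≤ r := norm_nonneg q
  apply Summable.of_norm_bounded (g := fun j => ((1-r)⁻¹/2 + 1) * r ^ (j+1))
  · apply Summable.mul_left
    have h := (summable_geometric_of_lt_one hr0 hq).mul_left r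
    apply h.congr; intro j; rw [← pow_succ']
  · intro j
    have hzn : ‖(-(q ^ (j+1)) : ℂ)‖ = r ^ (j+1) := by rw [norm_neg, norm_pow]
    have hz1 : ‖(-(q ^ (j+1)) : ℂ)‖ < 1 := by
      rw [hzn]; exact pow_lt_one₀ hr0 hq (by omega)
    have hb := Complex.norm_log_one_add_le hz1
    rw [show (1:ℂ) + -(q ^ (j+1)) = 1 - q ^ (j+1) by ring] at hb
    rw [hzn] at hb
    have hrj : r ^ (j+1) ≤ r := by
      calc r ^ (j+1) ≤ r ^ 1 := pow_le_pow_of_le_one hr0 hq.le (by omega)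
        _ = r := pow_one r
    have h1 : (1 - r ^ (j+1))⁻¹ ≤ (1 - r)⁻¹ := by
      apply inv_anti₀ (by linarith) (by linarith)
    have h2 : (r ^ (j+1))^2 ≤ r ^ (j+1) := by
      nlinarith [pow_nonneg hr0 (j+1), pow_le_one₀ hr0 hq.le (n := j+1)]
    have h3 : (0:ℝ) < (1 - r)⁻¹ := inv_pos.2 (by linarith)
    calc ‖Complex.log (1 - q ^ (j+1))‖
        ≤ (r ^ (j+1))^2 * (1 - r ^ (j+1))⁻¹ / 2 + r ^ (j+1) := hb
      _ ≤ r ^ (j+1) * (1 - r)⁻¹ / 2 + r ^ (j+1) := by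
          have := mul_le_mul h2 h1 (inv_nonneg.2 (by linarith)) (pow_nonneg hr0 _)
          linarith
      _ = ((1-r)⁻¹/2 + 1) * r ^ (j+1) := by ring

lemma hasProd_qp (hq : ‖q‖ < 1) :
    HasProd (fun j : ℕ => 1 - q ^ (j+1)) (∏' j : ℕ, (1 - q ^ (j+1))) := by
  exact (Complex.hasProd_of_hasSum_log (fun j => one_sub_pow_ne' hq j)
    (log_summable hq).hasSum).multipliable.hasProd

lemma tendsto_qpC (hq : ‖q‖ < 1) :
    Tendsto (fun n => qpC q n) atTop (𝓝 (∏' j : ℕ, (1 - q ^ (j+1)))) := by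
  simpa [qpC] using (hasProd_qp hq).tendsto_prod_nat

lemma P_ne (hq : ‖q‖ < 1) : (∏' j : ℕ, (1 - q ^ (j+1))) ≠ 0 := by
  have h1 : Real.exp (-(‖q‖ / (1 - ‖q‖) ^ 2)) ≤ ‖∏' j : ℕ, (1 - q ^ (j+1))‖ := by
    apply ge_of_tendsto ((tendsto_qpC hq).norm)
    exact Eventually.of_forall (norm_qpC_ge hq)
  intro h; rw [h, norm_zero] at h1
  exact absurd h1 (not_le.2 (Real.exp_pos _))

lemma tendsto_qpInv_nat (hq : ‖q‖ < 1) :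
    Tendsto (fun n : ℕ => qpInv q (n:ℤ)) atTop (𝓝 (∏' j : ℕ, (1 - q ^ (j+1)))⁻¹) := by
  have h := (tendsto_qpC hq).inv₀ (P_ne hq)
  apply h.congr; intro n; rw [qpInv_natCast]

lemma tendsto_qpInv_shift (hq : ‖q‖ < 1) (μ : ℤ) :
    Tendsto (fun N : ℕ => qpInv q ((N:ℤ) + μ)) atTop (𝓝 (∏' j : ℕ, (1 - q ^ (j+1)))⁻¹) := by
  have h1 : Tendsto (fun N : ℕ => ((N:ℤ) + μ).toNat) atTop atTop := by
    apply tendsto_atTop_atTop.2; intro b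
    exact ⟨b + μ.natAbs, fun a ha => by omega⟩
  have h2 := (tendsto_qpInv_nat hq).comp h1
  apply h2.congr'
  filter_upwards [eventually_ge_atTop μ.natAbs] with N hN
  simp only [Function.comp_apply]
  congr 1; omega

lemma summable_geom_sq (hq : ‖q‖ < 1) (hq0 : q ≠ 0) (μ : ℤ) :
    Summable (fun n : ℕ => ‖q‖ ^ ((n:ℤ)^2 + μ*n)) := by
  set r := ‖q‖ with hr
  have hr0 : 0 < r := norm_pos_iff.2 hq0
  set d : ℤ := (μ-1)^2 with hd
  refine Summable.of_nonneg_of_le (fun n => zpow_nonneg hr0.le _) (fun n => ?_)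
    ((summable_geometric_of_lt_one hr0.le hq).mul_left (r ^ (-d)))
  have he : (n:ℤ) - d ≤ (n:ℤ)^2 + μ*n := by nlinarith [sq_nonneg (2*(n:ℤ) + (μ-1))]
  calc r ^ ((n:ℤ)^2 + μ*n) ≤ r ^ ((n:ℤ) - d) :=
        zpow_le_zpow_right_of_le_one₀ hr0 hq.le he
    _ = r ^ (-d) * r ^ n := by
        rw [sub_eq_neg_add, zpow_add₀ hr0.ne', zpow_natCast]

lemma summable_a_norm (hq : ‖q‖ < 1) (hq0 : q ≠ 0) (μ : ℤ) :
    Summable (fun n : ℕ =>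
      ((Real.exp (-(‖q‖ / (1 - ‖q‖) ^ 2)))⁻¹)^2 * ‖q‖ ^ ((n:ℤ)^2 + μ*n)) :=
  (summable_geom_sq hq hq0 μ).mul_left _

lemma norm_a_le (hq : ‖q‖ < 1) (μ : ℤ) (n : ℕ) :
    ‖q ^ ((n:ℤ)^2 + μ*n) * (qpInv q (n+μ) * qpInv q n)‖
    ≤ ((Real.exp (-(‖q‖ / (1 - ‖q‖) ^ 2)))⁻¹)^2 * ‖q‖ ^ ((n:ℤ)^2 + μ*n) := by
  set K := (Real.exp (-(‖q‖ / (1 - ‖q‖) ^ 2)))⁻¹ with hK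
  have hK0 : 0 ≤ K := by positivity
  rw [norm_mul, norm_mul, norm_zpow]
  calc ‖q‖ ^ ((n:ℤ)^2 + μ*n) * (‖qpInv q (n+μ)‖ * ‖qpInv q (n:ℤ)‖)
      ≤ ‖q‖ ^ ((n:ℤ)^2 + μ*n) * (K * K) := by
        apply mul_le_mul_of_nonneg_left _ (zpow_nonneg (norm_nonneg q) _)
        exact mul_le_mul (norm_qpInv_le hq _) (norm_qpInv_le hq _) (norm_nonneg _) hK0
    _ = K^2 * ‖q‖ ^ ((n:ℤ)^2 + μ*n) := by ring

lemma summable_a (hq : ‖q‖ < 1) (hq0 : q ≠ 0) (μ : ℤ) :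
    Summable (fun n : ℕ => q ^ ((n:ℤ)^2 + μ*n) * (qpInv q (n+μ) * qpInv q n)) :=
  Summable.of_norm_bounded (summable_a_norm hq hq0 μ) (norm_a_le hq μ)

lemma durfee (hq : ‖q‖ < 1) (hq0 : q ≠ 0) (μ : ℤ) :
    ∑' n : ℕ, q ^ ((n:ℤ)^2 + μ*n) * (qpInv q (n+μ) * qpInv q n)
      = (∏' j : ℕ, (1 - q ^ (j+1)))⁻¹ := by
  set K := (Real.exp (-(‖q‖ / (1 - ‖q‖) ^ 2)))⁻¹ with hK
  have hK0 : (0:ℝ) < K := by rw [hK]; positivity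
  set P := ∏' j : ℕ, (1 - q ^ (j+1)) with hP
  set a : ℕ → ℂ := fun n => q ^ ((n:ℤ)^2 + μ*n) * (qpInv q (n+μ) * qpInv q n) with ha
  -- limit of the partial identities
  have t1 : Tendsto (fun N : ℕ => ∑' n : ℕ, a n * qpInv q ((N:ℤ) - n)) atTop
      (𝓝 (∑' n : ℕ, a n * P⁻¹)) := by
    apply tendsto_tsum_of_dominated_convergence
      (bound := fun n : ℕ => (K^2 * ‖q‖ ^ ((n:ℤ)^2 + μ*n)) * K)
    · exact (summable_a_norm hq hq0 μ).mul_right _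
    · intro n
      apply Tendsto.const_mul
      have h1 : Tendsto (fun N : ℕ => N - n) atTop atTop := tendsto_sub_atTop_nat n
      have h2 := (tendsto_qpInv_nat hq).comp h1
      apply h2.congr'
      filter_upwards [eventually_ge_atTop n] with N hN
      simp only [Function.comp_apply]
      congr 1; omega
    · apply Eventually.of_forall
      intro N n
      rw [norm_mul]
      exact mul_le_mul (norm_a_le hq μ n) (norm_qpInv_le hq _) (norm_nonneg _)
        (by positivity)
  have t2 : ∀ N : ℕ, ∑' n : ℕ, a n * qpInv q ((N:ℤ) - n)
      = qpInv q ((N:ℤ) + μ) * qpInv q (N:ℤ) := by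
    intro N
    rw [tsum_eq_sum (s := Finset.range (N+1)) ?_]
    · rw [← star_id hq hq0 N μ]
      apply Finset.sum_congr rfl
      intro n _; rw [ha]; ring
    · intro n hn
      rw [Finset.mem_range, not_lt] at hn
      rw [qpInv_of_neg (show (N:ℤ) - n < 0 by omega), mul_zero]
  have t3 : Tendsto (fun N : ℕ => qpInv q ((N:ℤ) + μ) * qpInv q (N:ℤ)) atTop
      (𝓝 (P⁻¹ * P⁻¹)) :=
    (tendsto_qpInv_shift hq μ).mul (tendsto_qpInv_nat hq)
  have t4 : (∑' n : ℕ, a n * P⁻¹) = P⁻¹ * P⁻¹ :=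
    tendsto_nhds_unique (Tendsto.congr t2 t1) t3
  rw [tsum_mul_right] at t4
  have hPinv : P⁻¹ ≠ 0 := inv_ne_zero (P_ne hq)
  exact mul_right_cancel₀ hPinv t4

end Lim

/-- the `NN`-extension of a tuple. -/
def NNf (k : ℕ) (N : Fin k → ℕ) (j : ℕ) : ℕ := if h : j < k then N ⟨j, h⟩ else 0

/-- generalized term of `F_k`. -/
noncomputable def trm (q : ℂ) (k : ℕ) (a b c : ℤ) (N : Fin k → ℕ) : ℂ :=
  q ^ ((∑ j ∈ Finset.range k, (NNf k N j : ℤ) ^ 2) + a * (NNf k N 0 : ℤ)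
        + b * ∑ j ∈ Finset.Ico 1 k, (NNf k N j : ℤ)) *
    (qpInv q ((NNf k N 0 : ℤ) + c) * qpInv q (NNf k N 0) *
      ∏ j ∈ Finset.Ico 1 k, qpInv q ((NNf k N j : ℤ) - (NNf k N (j - 1) : ℤ)))

lemma FF_eq (q : ℂ) (k : ℕ) (μ : ℤ) : FF q k μ = ∑' N : Fin k → ℕ, trm q k μ (μ+1) μ N := rfl

lemma NNf_lt {k : ℕ} {N : Fin k → ℕ} {j : ℕ} (h : j < k) : NNf k N j = N ⟨j, h⟩ := dif_pos h

lemma NNf_cons_zero {k : ℕ} (n : ℕ) (M : Fin k → ℕ) : NNf (k+1) (Fin.cons n M) 0 = n := by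
  rw [NNf_lt (Nat.succ_pos k)]; rfl

lemma NNf_cons_succ {k : ℕ} (n : ℕ) (M : Fin k → ℕ) (j : ℕ) :
    NNf (k+1) (Fin.cons n M) (j+1) = NNf k M j := by
  unfold NNf
  by_cases h : j < k
  · rw [dif_pos (Nat.succ_lt_succ h), dif_pos h]
    exact Fin.cons_succ (α := fun _ => ℕ) n M ⟨j, h⟩
  · rw [dif_neg (fun hc => h (Nat.lt_of_succ_lt_succ hc)), dif_neg h]

lemma summable_pi_geom {r : ℝ} (hr0 : 0 ≤ r) (hr1 : r < 1) :
    ∀ k, Summable (fun N : Fin k → ℕ => ∏ j : Fin k, r ^ (N j)) := by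
  intro k
  induction k with
  | zero => exact .of_finite
  | succ k ih =>
    have h := (summable_geometric_of_lt_one hr0 hr1).mul_of_nonneg ih
      (fun n => pow_nonneg hr0 n)
      (fun N => Finset.prod_nonneg fun j _ => pow_nonneg hr0 _)
    rw [← (Fin.consEquiv (fun _ : Fin (k+1) => ℕ)).summable_iff]
    apply h.congr
    intro x
    show r ^ x.1 * ∏ j : Fin k, r ^ (x.2 j) = ∏ j : Fin (k+1), r ^ (Fin.cons x.1 x.2 j)
    rw [Fin.prod_univ_succ]
    simp

lemma sum_NNf_eq {k : ℕ} (N : Fin k → ℕ) :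
    ∑ j ∈ Finset.range k, (NNf k N j : ℤ) = ∑ j : Fin k, (N j : ℤ) := by
  rw [← Fin.sum_univ_eq_sum_range (fun j => ((NNf k N j : ℤ)))]
  apply Finset.sum_congr rfl
  intro j _
  rw [NNf_lt j.2]

lemma norm_trm_le {q : ℂ} (hq : ‖q‖ < 1) (hq0 : q ≠ 0) {k : ℕ} (hk : 1 ≤ k) (a b c : ℤ)
    (N : Fin k → ℕ) :
    ‖trm q k a b c N‖ ≤
      ((Real.exp (-(‖q‖ / (1 - ‖q‖) ^ 2)))⁻¹ ^ (k+1) * ‖q‖ ^ (-((k:ℤ) * ((a-1)^2 + (b-1)^2))))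
        * ∏ j : Fin k, ‖q‖ ^ (N j) := by
  set r := ‖q‖ with hr
  have hr0 : 0 < r := norm_pos_iff.2 hq0
  set K := (Real.exp (-(r / (1 - r) ^ 2)))⁻¹ with hK
  have hK0 : (0:ℝ) < K := by rw [hK]; positivity
  set D : ℤ := (a-1)^2 + (b-1)^2 with hD
  set n0 : ℤ := (NNf k N 0 : ℤ) with hn0
  set s2 : ℤ := ∑ j ∈ Finset.Ico 1 k, (NNf k N j : ℤ)^2 with hs2
  set s1 : ℤ := ∑ j ∈ Finset.Ico 1 k, (NNf k N j : ℤ) with hs1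
  set S : ℤ := ∑ j ∈ Finset.range k, (NNf k N j : ℤ) with hS
  have hsplit2 : ∑ j ∈ Finset.range k, (NNf k N j : ℤ)^2 = n0^2 + s2 :=
    Finset.sum_range_eq_add_Ico _ hk
  have hsplit1 : S = n0 + s1 := Finset.sum_range_eq_add_Ico _ hk
  -- exponent lower bound
  have hE : S - (k:ℤ) * D ≤ (∑ j ∈ Finset.range k, (NNf k N j : ℤ)^2) + a * n0 + b * s1 := by
    rw [hsplit2, hsplit1]
    have hsum : s1 ≤ s2 + b * s1 + ((k:ℤ) - 1) * (b-1)^2 := by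
      have hpt : ∀ j ∈ Finset.Ico 1 k, (NNf k N j : ℤ)
          ≤ (NNf k N j : ℤ)^2 + b * (NNf k N j : ℤ) + (b-1)^2 := by
        intro j _
        nlinarith [sq_nonneg (2*(NNf k N j : ℤ) + (b-1))]
      have := Finset.sum_le_sum hpt
      rw [Finset.sum_add_distrib, Finset.sum_add_distrib, ← Finset.mul_sum,
        Finset.sum_const, Nat.card_Ico, nsmul_eq_mul] at this
      have hcast : ((k - 1 : ℕ) : ℤ) = (k:ℤ) - 1 := by omega
      rw [hcast] at this
      exact this
    have h0 : n0 ≤ n0^2 + a * n0 + (a-1)^2 := by nlinarith [sq_nonneg (2*n0 + (a-1))]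
    have hk' : (1:ℤ) ≤ (k:ℤ) := by exact_mod_cast hk
    nlinarith [sq_nonneg (a-1), sq_nonneg (b-1)]
  -- norm computation
  rw [trm, norm_mul, norm_mul, norm_mul, norm_zpow, norm_prod]
  have hb1 : ‖qpInv q (n0 + c)‖ * ‖qpInv q n0‖ ≤ K * K :=
    mul_le_mul (norm_qpInv_le hq _) (norm_qpInv_le hq _) (norm_nonneg _) hK0.le
  have hb2 : ∏ j ∈ Finset.Ico 1 k, ‖qpInv q ((NNf k N j : ℤ) - (NNf k N (j-1) : ℤ))‖
      ≤ K ^ (k-1) := by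
    calc ∏ j ∈ Finset.Ico 1 k, ‖qpInv q ((NNf k N j : ℤ) - (NNf k N (j-1) : ℤ))‖
        ≤ ∏ _j ∈ Finset.Ico 1 k, K :=
          Finset.prod_le_prod (fun j _ => norm_nonneg _) (fun j _ => norm_qpInv_le hq _)
      _ = K ^ (k-1) := by rw [Finset.prod_const, Nat.card_Ico]
  have hfac : ‖qpInv q (n0 + c)‖ * ‖qpInv q n0‖ *
      ∏ j ∈ Finset.Ico 1 k, ‖qpInv q ((NNf k N j : ℤ) - (NNf k N (j-1) : ℤ))‖ ≤ K ^ (k+1) := by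
    calc ‖qpInv q (n0 + c)‖ * ‖qpInv q n0‖ *
        ∏ j ∈ Finset.Ico 1 k, ‖qpInv q ((NNf k N j : ℤ) - (NNf k N (j-1) : ℤ))‖
        ≤ (K * K) * K ^ (k-1) := by
          apply mul_le_mul hb1 hb2 (Finset.prod_nonneg fun j _ => norm_nonneg _)
            (by positivity)
      _ = K ^ (k+1) := by
          rw [← pow_two, ← pow_add]
          congr 1
          omega
  have hq2 : r ^ ((∑ j ∈ Finset.range k, (NNf k N j : ℤ)^2) + a * n0 + b * s1)
      ≤ r ^ (-((k:ℤ) * D)) * ∏ j : Fin k, r ^ (N j) := by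
    have h1 : r ^ ((∑ j ∈ Finset.range k, (NNf k N j : ℤ)^2) + a * n0 + b * s1)
        ≤ r ^ (S - (k:ℤ)*D) := zpow_le_zpow_right_of_le_one₀ hr0 hq.le hE
    have h2 : r ^ (S - (k:ℤ)*D) = r ^ (-((k:ℤ)*D)) * ∏ j : Fin k, r ^ (N j) := by
      rw [sub_eq_neg_add, zpow_add₀ hr0.ne']
      congr 1
      have hS' : S = ((∑ j : Fin k, N j : ℕ) : ℤ) := by
        rw [hS, ← Fin.sum_univ_eq_sum_range (fun j => ((NNf k N j : ℤ)))]
        push_cast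
        exact Finset.sum_congr rfl fun j _ => by rw [NNf_lt j.2]
      rw [hS', zpow_natCast, ← Finset.prod_pow_eq_pow_sum]
    rw [← h2]; exact h1
  calc r ^ ((∑ j ∈ Finset.range k, (NNf k N j : ℤ)^2) + a * n0 + b * s1) *
      (‖qpInv q (n0 + c)‖ * ‖qpInv q n0‖ *
        ∏ j ∈ Finset.Ico 1 k, ‖qpInv q ((NNf k N j : ℤ) - (NNf k N (j-1) : ℤ))‖)
      ≤ (r ^ (-((k:ℤ) * D)) * ∏ j : Fin k, r ^ (N j)) * K ^ (k+1) := by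
        apply mul_le_mul hq2 hfac
          (mul_nonneg (mul_nonneg (norm_nonneg _) (norm_nonneg _))
            (Finset.prod_nonneg fun j _ => norm_nonneg _))
          (mul_nonneg (zpow_nonneg hr0.le _)
            (Finset.prod_nonneg fun j _ => pow_nonneg hr0.le _))
      _ = (K ^ (k+1) * r ^ (-((k:ℤ) * D))) * ∏ j : Fin k, r ^ (N j) := by ring

lemma summable_trm {q : ℂ} (hq : ‖q‖ < 1) (hq0 : q ≠ 0) {k : ℕ} (hk : 1 ≤ k) (a b c : ℤ) :
    Summable (trm q k a b c) := by
  have hr0 : 0 ≤ ‖q‖ := norm_nonneg q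
  apply Summable.of_norm_bounded (((summable_pi_geom hr0 hq k)).mul_left _)
  exact norm_trm_le hq hq0 hk a b c

lemma trm_W {q : ℂ} (hq0 : q ≠ 0) {k : ℕ} (hk : 1 ≤ k) (μ : ℤ) (M : Fin k → ℕ) :
    trm q k μ μ μ M
      = (q ^ ((∑ j ∈ Finset.range k, (NNf k M j : ℤ) ^ 2)
            + μ * ∑ j ∈ Finset.range k, (NNf k M j : ℤ)) *
          ∏ j ∈ Finset.Ico 1 k, qpInv q ((NNf k M j : ℤ) - (NNf k M (j - 1) : ℤ)))
        * (qpInv q ((NNf k M 0 : ℤ) + μ) * qpInv q (NNf k M 0)) := by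
  rw [trm]
  have hsplit : ∑ j ∈ Finset.range k, (NNf k M j : ℤ)
      = (NNf k M 0 : ℤ) + ∑ j ∈ Finset.Ico 1 k, (NNf k M j : ℤ) :=
    Finset.sum_range_eq_add_Ico _ hk
  rw [hsplit]
  rw [show (∑ j ∈ Finset.range k, (NNf k M j : ℤ) ^ 2)
        + μ * (NNf k M 0 : ℤ) + μ * ∑ j ∈ Finset.Ico 1 k, (NNf k M j : ℤ)
      = (∑ j ∈ Finset.range k, (NNf k M j : ℤ) ^ 2)
        + μ * ((NNf k M 0 : ℤ) + ∑ j ∈ Finset.Ico 1 k, (NNf k M j : ℤ)) by ring]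
  ring

lemma trm_cons {q : ℂ} (hq0 : q ≠ 0) {k : ℕ} (hk : 1 ≤ k) (μ : ℤ) (n : ℕ) (M : Fin k → ℕ) :
    trm q (k+1) μ μ μ (Fin.cons n M)
      = (q ^ ((n:ℤ)^2 + μ*n) *
          (qpInv q ((n:ℤ)+μ) * qpInv q (n:ℤ) * qpInv q ((NNf k M 0 : ℤ) - (n:ℤ))))
        * (q ^ ((∑ j ∈ Finset.range k, (NNf k M j : ℤ) ^ 2)
              + μ * ∑ j ∈ Finset.range k, (NNf k M j : ℤ)) *
            ∏ j ∈ Finset.Ico 1 k, qpInv q ((NNf k M j : ℤ) - (NNf k M (j - 1) : ℤ))) := by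
  rw [trm]
  -- (i) the square sum
  have h1 : ∑ j ∈ Finset.range (k+1), (NNf (k+1) (Fin.cons n M) j : ℤ) ^ 2
      = (n:ℤ)^2 + ∑ j ∈ Finset.range k, (NNf k M j : ℤ) ^ 2 := by
    rw [Finset.sum_range_succ']
    rw [NNf_cons_zero]
    rw [add_comm]
    congr 1
    exact Finset.sum_congr rfl fun j _ => by rw [NNf_cons_succ]
  -- (ii) head value
  have h2 : NNf (k+1) (Fin.cons n M) 0 = n := NNf_cons_zero n M
  -- (iii) the linear sum
  have h3 : ∑ j ∈ Finset.Ico 1 (k+1), (NNf (k+1) (Fin.cons n M) j : ℤ)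
      = ∑ j ∈ Finset.range k, (NNf k M j : ℤ) := by
    rw [Finset.sum_Ico_eq_sum_range]
    simp only [Nat.add_sub_cancel]
    exact Finset.sum_congr rfl fun j _ => by rw [add_comm 1 j, NNf_cons_succ]
  -- (iv) the product
  have h4 : ∏ j ∈ Finset.Ico 1 (k+1),
        qpInv q ((NNf (k+1) (Fin.cons n M) j : ℤ) - (NNf (k+1) (Fin.cons n M) (j-1) : ℤ))
      = qpInv q ((NNf k M 0 : ℤ) - (n:ℤ)) *
        ∏ j ∈ Finset.Ico 1 k, qpInv q ((NNf k M j : ℤ) - (NNf k M (j - 1) : ℤ)) := by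
    rw [Finset.prod_eq_prod_Ico_succ_bot (by omega : 1 < k+1)]
    congr 1
    · have h5 : NNf (k+1) (Fin.cons n M) 1 = NNf k M 0 := NNf_cons_succ n M 0
      rw [show (1:ℕ) - 1 = 0 from rfl, h2, h5]
    · rw [Finset.prod_Ico_eq_prod_range, Finset.prod_Ico_eq_prod_range,
        show k + 1 - (1+1) = k - 1 from by omega]
      apply Finset.prod_congr rfl
      intro j _
      have ha : NNf (k+1) (Fin.cons n M) (1 + 1 + j) = NNf k M (1 + j) := by
        rw [show 1 + 1 + j = (1 + j) + 1 from by omega]; exact NNf_cons_succ n M (1+j)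
      have hb : NNf (k+1) (Fin.cons n M) (1 + 1 + j - 1) = NNf k M (1 + j - 1) := by
        rw [show 1 + 1 + j - 1 = j + 1 from by omega, show (1:ℕ) + j - 1 = j from by omega]
        exact NNf_cons_succ n M j
      rw [ha, hb]
  rw [h1, h2, h3, h4]
  rw [show ((n:ℤ)^2 + ∑ j ∈ Finset.range k, (NNf k M j : ℤ) ^ 2)
        + μ * (n:ℤ) + μ * ∑ j ∈ Finset.range k, (NNf k M j : ℤ)
      = ((n:ℤ)^2 + μ*(n:ℤ)) + ((∑ j ∈ Finset.range k, (NNf k M j : ℤ) ^ 2)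
          + μ * ∑ j ∈ Finset.range k, (NNf k M j : ℤ)) by ring]
  rw [zpow_add₀ hq0]
  ring

lemma G_eq {q : ℂ} (hq : ‖q‖ < 1) (hq0 : q ≠ 0) :
    ∀ k : ℕ, 1 ≤ k → ∀ μ : ℤ,
      ∑' N : Fin k → ℕ, trm q k μ μ μ N = (∏' j : ℕ, (1 - q ^ (j+1)))⁻¹ := by
  intro k
  induction k with
  | zero => omega
  | succ k ih =>
    intro _ μ
    rcases Nat.eq_zero_or_pos k with hk0 | hkpos
    · subst hk0
      rw [← Equiv.tsum_eq (Equiv.funUnique (Fin 1) ℕ).symm (trm q 1 μ μ μ)]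
      rw [← durfee hq hq0 μ]
      apply tsum_congr
      intro n
      rw [trm]
      have h0 : NNf 1 ((Equiv.funUnique (Fin 1) ℕ).symm n) 0 = n := by
        rw [NNf_lt (by omega : 0 < 1)]; rfl
      simp only [Finset.sum_range_one, Finset.Ico_self, Finset.sum_empty,
        Finset.prod_empty, mul_zero, add_zero, mul_one, h0]
    · have hk1 : 1 ≤ k := hkpos
      set e := Fin.consEquiv (fun _ : Fin (k+1) => ℕ) with he
      have hsum : Summable (fun x : ℕ × (Fin k → ℕ) => trm q (k+1) μ μ μ (e x)) :=
        (summable_trm hq hq0 (by omega) μ μ μ).comp_injective e.injective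
      rw [← Equiv.tsum_eq e (trm q (k+1) μ μ μ)]
      rw [Summable.tsum_prod hsum]
      rw [← Summable.tsum_comm (f := fun b c => trm q (k+1) μ μ μ (e (b, c))) hsum]
      have inner : ∀ M : Fin k → ℕ,
          ∑' n : ℕ, trm q (k+1) μ μ μ (e (n, M)) = trm q k μ μ μ M := by
        intro M
        have hcons : ∀ n : ℕ, trm q (k+1) μ μ μ (e (n, M))
            = trm q (k+1) μ μ μ (Fin.cons n M) := by
          intro n; rfl
        calc ∑' n : ℕ, trm q (k+1) μ μ μ (e (n, M))
            = ∑' n : ℕ, (q ^ ((n:ℤ)^2 + μ*n) *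
                (qpInv q ((n:ℤ)+μ) * qpInv q (n:ℤ) * qpInv q ((NNf k M 0 : ℤ) - (n:ℤ))))
              * (q ^ ((∑ j ∈ Finset.range k, (NNf k M j : ℤ) ^ 2)
                    + μ * ∑ j ∈ Finset.range k, (NNf k M j : ℤ)) *
                  ∏ j ∈ Finset.Ico 1 k, qpInv q ((NNf k M j : ℤ) - (NNf k M (j - 1) : ℤ))) := by
              apply tsum_congr; intro n; rw [hcons n, trm_cons hq0 hk1]
          _ = (∑' n : ℕ, q ^ ((n:ℤ)^2 + μ*n) *
                (qpInv q ((n:ℤ)+μ) * qpInv q (n:ℤ) * qpInv q ((NNf k M 0 : ℤ) - (n:ℤ))))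
              * (q ^ ((∑ j ∈ Finset.range k, (NNf k M j : ℤ) ^ 2)
                    + μ * ∑ j ∈ Finset.range k, (NNf k M j : ℤ)) *
                  ∏ j ∈ Finset.Ico 1 k, qpInv q ((NNf k M j : ℤ) - (NNf k M (j - 1) : ℤ))) :=
              tsum_mul_right
          _ = (qpInv q ((NNf k M 0 : ℤ) + μ) * qpInv q (NNf k M 0 : ℤ))
              * (q ^ ((∑ j ∈ Finset.range k, (NNf k M j : ℤ) ^ 2)
                    + μ * ∑ j ∈ Finset.range k, (NNf k M j : ℤ)) *
                  ∏ j ∈ Finset.Ico 1 k, qpInv q ((NNf k M j : ℤ) - (NNf k M (j - 1) : ℤ))) := by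
              congr 1
              rw [tsum_eq_sum (s := Finset.range (NNf k M 0 + 1)) ?_]
              · exact star_id hq hq0 (NNf k M 0) μ
              · intro n hn
                rw [Finset.mem_range, not_lt] at hn
                rw [qpInv_of_neg (show (NNf k M 0 : ℤ) - (n:ℤ) < 0 by omega)]
                ring
          _ = trm q k μ μ μ M := by rw [trm_W hq0 hk1]; ring
      rw [tsum_congr inner]
      exact ih hk1 μ

lemma trm_vanish {q : ℂ} {k : ℕ} (hk : 1 ≤ k) (μ : ℤ) (hμ : 0 ≤ μ) (X : Fin k → ℕ)
    (hX : X ∉ Set.range (fun (N : Fin k → ℕ) (j : Fin k) => N j + μ.toNat)) :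
    trm q k (-μ-1) (-μ) (-μ-1) X = 0 := by
  set m := μ.toNat with hm'
  have hm : (m:ℤ) = μ := Int.toNat_of_nonneg hμ
  have hex : ∃ j : ℕ, ∃ h : j < k, X ⟨j, h⟩ < m := by
    by_contra h
    push_neg at h
    exact hX ⟨fun j => X j - m, funext fun j => by
      have h2 := h j.1 j.2
      rw [Fin.eta] at h2
      show X j - m + m = X j
      omega⟩
  classical
  let j₀ := Nat.find hex
  obtain ⟨hj₀k, hj₀⟩ := Nat.find_spec hex
  rcases Nat.eq_zero_or_pos j₀ with h0 | h1
  · -- first factor vanishes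
    rw [trm, NNf_lt (show 0 < k by omega)]
    have hX0 : X ⟨0, by omega⟩ < m := by
      have : (⟨0, by omega⟩ : Fin k) = ⟨j₀, hj₀k⟩ := by
        apply Fin.ext; simp [h0]
      rw [this]; exact hj₀
    rw [qpInv_of_neg (show (X ⟨0, by omega⟩ : ℤ) + (-μ-1) < 0 by omega)]
    ring
  · -- a difference factor vanishes
    have hj₀k' : j₀ < k := hj₀k
    have hprev : m ≤ X ⟨j₀ - 1, by omega⟩ := by
      by_contra hc
      push_neg at hc
      have := Nat.find_min hex (show j₀ - 1 < j₀ by omega)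
      exact this ⟨by omega, hc⟩
    rw [trm]
    have hzero : ∏ j ∈ Finset.Ico 1 k,
        qpInv q ((NNf k X j : ℤ) - (NNf k X (j - 1) : ℤ)) = 0 := by
      apply Finset.prod_eq_zero (i := j₀) (Finset.mem_Ico.2 ⟨h1, hj₀k'⟩)
      rw [NNf_lt hj₀k', NNf_lt (show j₀ - 1 < k by omega)]
      apply qpInv_of_neg
      have hlt : X ⟨j₀, hj₀k'⟩ < m := hj₀
      omega
    rw [hzero]
    ring

lemma diff_pt {q : ℂ} (hq : ‖q‖ < 1) (hq0 : q ≠ 0) {k : ℕ} (hk : 1 ≤ k) (μ : ℤ) (hμ : 0 ≤ μ)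
    (N : Fin k → ℕ) :
    trm q k (μ-1) μ (μ-1) N
      - q ^ μ * trm q k (-μ-1) (-μ) (-μ-1) (fun j => N j + μ.toNat)
      = (1 - q ^ μ) * trm q k μ μ μ N := by
  set m := μ.toNat with hm'
  have hm : (m:ℤ) = μ := Int.toNat_of_nonneg hμ
  simp only [trm]
  set s2 := ∑ j ∈ Finset.range k, (NNf k N j : ℤ)^2 with hs2
  set s1 := ∑ j ∈ Finset.Ico 1 k, (NNf k N j : ℤ) with hs1
  set n0 := (NNf k N 0 : ℤ) with hn0
  set Pr := ∏ j ∈ Finset.Ico 1 k, qpInv q ((NNf k N j : ℤ) - (NNf k N (j-1) : ℤ)) with hPr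
  have hNN : ∀ j, j < k → NNf k (fun i => N i + m) j = NNf k N j + m := by
    intro j hj; rw [NNf_lt hj, NNf_lt hj]
  have hsplitS : ∑ j ∈ Finset.range k, (NNf k N j : ℤ) = n0 + s1 :=
    Finset.sum_range_eq_add_Ico _ hk
  have h1 : ∑ j ∈ Finset.range k, (NNf k (fun i => N i + m) j : ℤ)^2
      = s2 + 2*μ*(n0 + s1) + (k:ℤ)*μ^2 := by
    have step1 : ∑ j ∈ Finset.range k, (NNf k (fun i => N i + m) j : ℤ)^2
        = ∑ j ∈ Finset.range k, ((NNf k N j : ℤ)^2 + 2*μ*(NNf k N j : ℤ) + μ^2) := by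
      apply Finset.sum_congr rfl
      intro j hj
      rw [hNN j (Finset.mem_range.1 hj)]
      push_cast [hm]
      ring
    rw [step1, Finset.sum_add_distrib, Finset.sum_add_distrib, ← Finset.mul_sum,
      Finset.sum_const, Finset.card_range, nsmul_eq_mul, ← hs2, hsplitS]
  have h2 : ∑ j ∈ Finset.Ico 1 k, (NNf k (fun i => N i + m) j : ℤ)
      = s1 + ((k:ℤ) - 1)*μ := by
    have step1 : ∑ j ∈ Finset.Ico 1 k, (NNf k (fun i => N i + m) j : ℤ)
        = ∑ j ∈ Finset.Ico 1 k, ((NNf k N j : ℤ) + μ) := by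
      apply Finset.sum_congr rfl
      intro j hj
      rw [hNN j (Finset.mem_Ico.1 hj).2]
      push_cast [hm]
      ring
    rw [step1, Finset.sum_add_distrib, Finset.sum_const, Nat.card_Ico, nsmul_eq_mul, ← hs1]
    have : ((k - 1 : ℕ) : ℤ) = (k:ℤ) - 1 := by omega
    rw [this]
  have h3 : (NNf k (fun i => N i + m) 0 : ℤ) = n0 + μ := by
    rw [hNN 0 (by omega)]; push_cast [hm]; ring
  have h4 : ∏ j ∈ Finset.Ico 1 k,
      qpInv q ((NNf k (fun i => N i + m) j : ℤ) - (NNf k (fun i => N i + m) (j-1) : ℤ)) = Pr := by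
    apply Finset.prod_congr rfl
    intro j hj
    obtain ⟨hj1, hjk⟩ := Finset.mem_Ico.1 hj
    rw [hNN j hjk, hNN (j-1) (by omega)]
    congr 1
    push_cast
    ring
  rw [h1, h2, h3, h4]
  -- rewrite qpInv's
  have e0 : qpInv q (n0 + μ + (-μ-1)) = (1 - q ^ n0) * qpInv q n0 := by
    rw [show n0 + μ + (-μ-1) = n0 - 1 by ring, qpInv_sub_one hq hq0]
  have e1 : qpInv q (n0 + (μ-1)) = (1 - q ^ (n0+μ)) * qpInv q (n0+μ) := by
    rw [show n0 + (μ-1) = (n0+μ) - 1 by ring, qpInv_sub_one hq hq0]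
  rw [e0, e1]
  -- exponent normalizations
  have E2 : q ^ (s2 + 2*μ*(n0 + s1) + (k:ℤ)*μ^2 + (-μ-1) * (n0 + μ) + (-μ) * (s1 + ((k:ℤ) - 1)*μ))
      = q ^ (s2 + (μ-1) * n0 + μ * s1) * q ^ (-μ) := by
    rw [← zpow_add₀ hq0]; congr 1; ring
  rw [E2]
  have r1 : q ^ (s2 + (μ-1) * n0 + μ * s1) * q ^ n0 = q ^ (s2 + μ * n0 + μ * s1) := by
    rw [← zpow_add₀ hq0]; congr 1; ring
  have r2 : q ^ (s2 + (μ-1) * n0 + μ * s1) * q ^ (n0+μ)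
      = q ^ (s2 + μ * n0 + μ * s1) * q ^ μ := by
    rw [← zpow_add₀ hq0, ← zpow_add₀ hq0]; congr 1; ring
  have r3 : q ^ μ * q ^ (-μ) = 1 := by
    rw [← zpow_add₀ hq0]; simp
  set A := q ^ (s2 + (μ-1) * n0 + μ * s1) with hA
  set B := q ^ (s2 + μ * n0 + μ * s1) with hB
  set X := qpInv q (n0+μ) with hX
  set Y := qpInv q n0 with hY
  linear_combination (X*Y*Pr) * r1 - (X*Y*Pr) * r2
    + ((A * q ^ n0 - A)*X*Y*Pr) * r3

lemma main_nonneg {q : ℂ} (hq : ‖q‖ < 1) (hq0 : q ≠ 0) {k : ℕ} (hk : 1 ≤ k) (μ : ℤ)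
    (hμ : 0 ≤ μ) :
    FF q k (μ - 1) - q ^ μ * FF q k (-μ - 1)
      = (1 - q ^ μ) * (∏' j : ℕ, (1 - q ^ (j + 1)))⁻¹ := by
  have hF1 : FF q k (μ-1) = ∑' N : Fin k → ℕ, trm q k (μ-1) μ (μ-1) N := by
    rw [FF_eq, show μ - 1 + 1 = μ from by ring]
  have hF2 : FF q k (-μ-1) = ∑' N : Fin k → ℕ, trm q k (-μ-1) (-μ) (-μ-1) N := by
    rw [FF_eq, show -μ - 1 + 1 = -μ from by ring]
  set ι : (Fin k → ℕ) → (Fin k → ℕ) := fun N j => N j + μ.toNat with hι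
  have hinj : Function.Injective ι := by
    intro a b hab
    funext j
    have h := congrFun hab j
    simp only [hι] at h
    omega
  have hshift : ∑' N : Fin k → ℕ, trm q k (-μ-1) (-μ) (-μ-1) (ι N)
      = ∑' N : Fin k → ℕ, trm q k (-μ-1) (-μ) (-μ-1) N := by
    apply Function.Injective.tsum_eq hinj
    intro X hX
    by_contra hXr
    exact hX (trm_vanish hk μ hμ X hXr)
  have hsum1 : Summable (trm q k (μ-1) μ (μ-1)) := summable_trm hq hq0 hk _ _ _
  have hsum2 : Summable (fun N : Fin k → ℕ => q ^ μ * trm q k (-μ-1) (-μ) (-μ-1) (ι N)) :=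
    (((summable_trm hq hq0 hk (-μ-1) (-μ) (-μ-1)).comp_injective hinj)).mul_left _
  calc FF q k (μ-1) - q ^ μ * FF q k (-μ-1)
      = (∑' N : Fin k → ℕ, trm q k (μ-1) μ (μ-1) N)
        - q ^ μ * ∑' N : Fin k → ℕ, trm q k (-μ-1) (-μ) (-μ-1) (ι N) := by
        rw [hF1, hF2, hshift]
    _ = (∑' N : Fin k → ℕ, trm q k (μ-1) μ (μ-1) N)
        - ∑' N : Fin k → ℕ, q ^ μ * trm q k (-μ-1) (-μ) (-μ-1) (ι N) := by
        rw [tsum_mul_left]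
    _ = ∑' N : Fin k → ℕ, (trm q k (μ-1) μ (μ-1) N
          - q ^ μ * trm q k (-μ-1) (-μ) (-μ-1) (ι N)) := (Summable.tsum_sub hsum1 hsum2).symm
    _ = ∑' N : Fin k → ℕ, (1 - q ^ μ) * trm q k μ μ μ N :=
        tsum_congr (fun N => diff_pt hq hq0 hk μ hμ N)
    _ = (1 - q ^ μ) * ∑' N : Fin k → ℕ, trm q k μ μ μ N := tsum_mul_left
    _ = (1 - q ^ μ) * (∏' j : ℕ, (1 - q ^ (j + 1)))⁻¹ := by
        rw [G_eq hq hq0 k hk μ]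

/-- `F_k(μ-1) - q^μ F_k(-μ-1) = (1 - q^μ)/(q)_∞`. -/
theorem stmt14 (q : ℂ) (hq : ‖q‖ < 1) (hq0 : q ≠ 0) (k : ℕ) (hk : 1 ≤ k) (μ : ℤ) :
    FF q k (μ - 1) - q ^ μ * FF q k (-μ - 1)
      = (1 - q ^ μ) * (∏' j : ℕ, (1 - q ^ (j + 1)))⁻¹ := by
  rcases le_or_gt 0 μ with hμ | hμ
  · exact main_nonneg hq hq0 hk μ hμ
  · have h := main_nonneg hq hq0 hk (-μ) (by omega)
    rw [show -(-μ) - 1 = μ - 1 from by ring] at h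
    have hinv : q ^ μ * q ^ (-μ) = 1 := by
      rw [← zpow_add₀ hq0]; simp
    linear_combination (-(q ^ μ)) * h
      - (FF q k (μ-1) - (∏' j : ℕ, (1 - q ^ (j + 1)))⁻¹) * hinv
end

section
/- For p = 3 the admissibility conditions on monomial exponents read: n_1 ∈ ℤ_{≥0} + Δ_{2,1}, n_{i+1} − n_i ≥ −p'/2 + 3 (1 ≤ i ≤ L−1), n_{i+2} − n_i ≥ 1 (1 ≤ i ≤ L−2), where Δ_{2,1} = (p'−2)/4 and n_i ∈ ℤ − (−1)^i Δ_{2,1}. Claim: any rewriting process that replaces a pair (n_i, n_{i+1}) with n_{i+1} − n_i ≤ −p'/2 + 2 by (n_i − l, n_{i+1} + l) with l ≥ 1 preserves Σ n_i, strictly increases Σ i·n_i, and (given Σ_{j=1}^{i} n_j > 0 for all i) terminates after finitely many steps. -/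
/-- The set `S` of sequences `(n_1,…,n_L)` with `n_i ∈ ℤ - (-1)^i Δ_{2,1}`
(`Δ_{2,1} = (p'-2)/4`) and all partial sums `Σ_{j=1}^i n_j` positive. -/
def InS (p' L : ℕ) (n : ℕ → ℚ) : Prop :=
  (∀ i, 1 ≤ i → i ≤ L → ∃ z : ℤ, n i = (z : ℚ) - (-1 : ℚ) ^ i * (((p' : ℚ) - 2) / 4)) ∧
  ∀ i, 1 ≤ i → i ≤ L → 0 < ∑ j ∈ Finset.Icc 1 i, n j

/-- A rewriting step: choose `i` with `n_{i+1} - n_i ≤ -p'/2 + 2` and an integer `l ≥ 1`,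
and replace `(n_i, n_{i+1})` by `(n_i - l, n_{i+1} + l)`. -/
def StepR (p' L : ℕ) (n n' : ℕ → ℚ) : Prop :=
  ∃ i : ℕ, 1 ≤ i ∧ i + 1 ≤ L ∧
    ∃ l : ℤ, 1 ≤ l ∧ n (i + 1) - n i ≤ -(p' : ℚ) / 2 + 2 ∧
      n' i = n i - l ∧ n' (i + 1) = n (i + 1) + l ∧
      ∀ j, j ≠ i → j ≠ i + 1 → n' j = n j

/-- core computation for a step -/
private lemma step_sums (p' L : ℕ) (n n' : ℕ → ℚ) (h : StepR p' L n n') :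
    (∑ i ∈ Finset.Icc 1 L, n' i = ∑ i ∈ Finset.Icc 1 L, n i) ∧
    ∃ l : ℤ, 1 ≤ l ∧
      ∑ i ∈ Finset.Icc 1 L, (i : ℚ) * n' i = (∑ i ∈ Finset.Icc 1 L, (i : ℚ) * n i) + l := by
  obtain ⟨i, hi1, hiL, l, hl, _, h1, h2, h3⟩ := h
  have hmem : ({i, i + 1} : Finset ℕ) ⊆ Finset.Icc 1 L := by
    intro x hx
    simp only [Finset.mem_insert, Finset.mem_singleton] at hx
    rcases hx with rfl | rfl <;> simp [Finset.mem_Icc] <;> omega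
  have hne : i ≠ i + 1 := by omega
  have key : ∀ w : ℕ → ℚ,
      ∑ j ∈ Finset.Icc 1 L, w j * (n' j - n j)
        = w i * (n' i - n i) + w (i + 1) * (n' (i + 1) - n (i + 1)) := by
    intro w
    rw [← Finset.sum_subset hmem, Finset.sum_pair hne]
    intro x _ hx
    simp only [Finset.mem_insert, Finset.mem_singleton, not_or] at hx
    rw [h3 x hx.1 hx.2]; ring
  constructor
  · have := key (fun _ => 1)
    simp only [one_mul] at this
    rw [h1, h2] at this
    have h' : ∑ j ∈ Finset.Icc 1 L, (n' j - n j) = 0 := by rw [this]; ring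
    rw [Finset.sum_sub_distrib] at h'
    linarith
  · refine ⟨l, hl, ?_⟩
    have := key (fun j => (j : ℚ))
    rw [h1, h2] at this
    push_cast at this
    have h' : ∑ j ∈ Finset.Icc 1 L, ((j : ℚ) * n' j - (j : ℚ) * n j) = l := by
      rw [Finset.sum_congr rfl (fun j _ => by ring :
        ∀ j ∈ Finset.Icc 1 L, (j:ℚ) * n' j - (j:ℚ) * n j = (j:ℚ) * (n' j - n j)), this]
      ring
    rw [Finset.sum_sub_distrib] at h'
    linarith

/-- the weighted sum is bounded by L times the total sum, given positive partial sums -/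
private lemma weighted_bound : ∀ (L : ℕ) (n : ℕ → ℚ),
    (∀ i, 1 ≤ i → i ≤ L → 0 < ∑ j ∈ Finset.Icc 1 i, n j) →
    ∑ i ∈ Finset.Icc 1 L, (i : ℚ) * n i ≤ (L : ℚ) * ∑ i ∈ Finset.Icc 1 L, n i := by
  intro L
  induction L with
  | zero => intro n _; simp
  | succ M ih =>
    intro n hpos
    have h1 : (1:ℕ) ≤ M + 1 := by omega
    rw [Finset.sum_Icc_succ_top h1, Finset.sum_Icc_succ_top h1]
    have hP : 0 ≤ ∑ j ∈ Finset.Icc 1 M, n j := by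
      rcases Nat.eq_zero_or_pos M with rfl | hM
      · simp
      · exact le_of_lt (hpos M hM (by omega))
    have := ih n (fun i hi hiM => hpos i hi (by omega))
    push_cast
    nlinarith [this, hP]

/-- Each rewriting step preserves `Σ n_i` and strictly increases `Σ i n_i`, and any
rewriting sequence within `S` terminates after finitely many steps. -/
theorem stmt18 (p' L : ℕ) (hp : 3 < p') (hcop : Nat.Coprime 3 p') (hL : 1 ≤ L) :
    (∀ n n' : ℕ → ℚ, InS p' L n → InS p' L n' → StepR p' L n n' →
        (∑ i ∈ Finset.Icc 1 L, n' i = ∑ i ∈ Finset.Icc 1 L, n i) ∧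
          ∑ i ∈ Finset.Icc 1 L, (i : ℚ) * n i < ∑ i ∈ Finset.Icc 1 L, (i : ℚ) * n' i) ∧
      ¬∃ f : ℕ → ℕ → ℚ, (∀ k, InS p' L (f k)) ∧ ∀ k, StepR p' L (f k) (f (k + 1)) := by
  constructor
  · intro n n' _ _ hstep
    obtain ⟨hsum, l, hl, hw⟩ := step_sums p' L n n' hstep
    refine ⟨hsum, ?_⟩
    rw [hw]
    have : (1:ℚ) ≤ l := by exact_mod_cast hl
    linarith
  · rintro ⟨f, hS, hstep⟩
    set g : ℕ → ℚ := fun k => ∑ i ∈ Finset.Icc 1 L, (i : ℚ) * f k i with hg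
    set S : ℚ := ∑ i ∈ Finset.Icc 1 L, f 0 i with hSdef
    have hsum_inv : ∀ k, ∑ i ∈ Finset.Icc 1 L, f k i = S := by
      intro k
      induction k with
      | zero => rfl
      | succ m ihm =>
        obtain ⟨hs, _⟩ := step_sums p' L (f m) (f (m + 1)) (hstep m)
        rw [hs, ihm]
    have hginc : ∀ k, g k + 1 ≤ g (k + 1) := by
      intro k
      obtain ⟨_, l, hl, hw⟩ := step_sums p' L (f k) (f (k + 1)) (hstep k)
      have : (1:ℚ) ≤ l := by exact_mod_cast hl
      simp only [hg]
      rw [hw]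
      linarith
    have hglb : ∀ k, g 0 + k ≤ g k := by
      intro k
      induction k with
      | zero => simp
      | succ m ihm =>
        have := hginc m
        push_cast
        linarith
    have hub : ∀ k, g k ≤ (L : ℚ) * S := by
      intro k
      have := weighted_bound L (f k) (hS k).2
      rw [hsum_inv k] at this
      exact this
    obtain ⟨k, hk⟩ := exists_nat_gt ((L : ℚ) * S - g 0)
    have := hglb k
    have := hub k
    linarith
end
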